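/- arXiv:1112.1654 — 8 statements merged into one kernel-verified Lean document; each statement's English description precedes it below -/
import Mathlib

section
/- Let V = {V_i}_{i=1}^m be a projective RS for ℂ^d with weights v_i. Define S_{V,D} = ∑_i P_{range(V_i*)} (which is positive definite) and W_0 = {v_i^{-2} V_i S_{V,D}^{-1}}_{i=1}^m. Then W_0 is a dual RS of V, and for every dual W of V, ∑_i ‖W_i* V_i‖_F² ≥ ∑_i ‖(W_0)_i* V_i‖_F², with equality if and only if W = W_0. In particular W_0 is the unique minimizer of the 2-error ( ∑_i ‖W_i* V_i‖_F² )^{1/2} over all duals of V. -/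
open scoped Matrix ComplexOrder

/-- The Frobenius norm of a complex matrix. -/
noncomputable def frob {m n : ℕ} (A : Matrix (Fin m) (Fin n) ℂ) : ℝ :=
  Real.sqrt ((Matrix.trace (Aᴴ * A)).re)

lemma retr_eq {p q : ℕ} (M : Matrix (Fin p) (Fin q) ℂ) :
    (Matrix.trace (Mᴴ * M)).re = ∑ j, ∑ i, Complex.normSq (M i j) := by
  simp [Matrix.trace, Matrix.diag, Matrix.mul_apply, Matrix.conjTranspose_apply,
    Complex.re_sum, Complex.normSq_apply]

lemma retr_nonneg {p q : ℕ} (M : Matrix (Fin p) (Fin q) ℂ) :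
    0 ≤ (Matrix.trace (Mᴴ * M)).re := by
  rw [retr_eq]
  apply Finset.sum_nonneg; intro j _
  apply Finset.sum_nonneg; intro i _
  exact Complex.normSq_nonneg _

lemma retr_eq_zero_iff {p q : ℕ} (M : Matrix (Fin p) (Fin q) ℂ) :
    (Matrix.trace (Mᴴ * M)).re = 0 ↔ M = 0 := by
  rw [retr_eq]
  constructor
  · intro h
    ext i j
    have h1 : ∀ j ∈ Finset.univ, (0:ℝ) ≤ ∑ i, Complex.normSq (M i j) := by
      intro j _
      exact Finset.sum_nonneg fun i _ => Complex.normSq_nonneg _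
    have := (Finset.sum_eq_zero_iff_of_nonneg h1).1 h j (Finset.mem_univ j)
    have h2 : ∀ i ∈ Finset.univ, (0:ℝ) ≤ Complex.normSq (M i j) := by
      intro i _; exact Complex.normSq_nonneg _
    have := (Finset.sum_eq_zero_iff_of_nonneg h2).1 this i (Finset.mem_univ i)
    simpa [Complex.normSq_eq_zero] using this
  · intro h; simp [h]

lemma frob_sq {p q : ℕ} (M : Matrix (Fin p) (Fin q) ℂ) :
    frob M ^ 2 = (Matrix.trace (Mᴴ * M)).re :=
  Real.sq_sqrt (retr_nonneg M)

lemma idem_absorb {d : ℕ} {Pm Q : Matrix (Fin d) (Fin d) ℂ}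
    (hQi : Q * Q = Q)
    (hr : LinearMap.range Pm.mulVecLin ≤ LinearMap.range Q.mulVecLin) :
    Q * Pm = Pm := by
  apply Matrix.toLin'.injective
  apply LinearMap.ext
  intro x
  obtain ⟨y, hy⟩ := hr ⟨x, rfl⟩
  simp only [Matrix.mulVecLin_apply] at hy
  simp only [Matrix.toLin'_apply]
  calc (Q * Pm) *ᵥ x = Q *ᵥ (Pm *ᵥ x) := by rw [← Matrix.mulVec_mulVec]
    _ = Q *ᵥ (Q *ᵥ y) := by rw [hy]
    _ = (Q * Q) *ᵥ y := by rw [Matrix.mulVec_mulVec]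
    _ = Pm *ᵥ x := by rw [hQi, hy]

lemma proj_eq_of_range_eq {d : ℕ} {Pm Q : Matrix (Fin d) (Fin d) ℂ}
    (hPh : Pmᴴ = Pm) (hPi : Pm * Pm = Pm)
    (hQh : Qᴴ = Q) (hQi : Q * Q = Q)
    (hr : LinearMap.range Pm.mulVecLin = LinearMap.range Q.mulVecLin) :
    Pm = Q := by
  have h1 : Q * Pm = Pm := idem_absorb hQi hr.le
  have h2 : Pm * Q = Q := idem_absorb hPi hr.ge
  have h3 : Q * Pm = Q := by
    have := congrArg Matrix.conjTranspose h2
    rwa [Matrix.conjTranspose_mul, hPh, hQh] at this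
  rw [← h1, h3]

lemma real_mul_nonneg' {r : ℝ} (hr : 0 ≤ r) {z : ℂ} (hz : 0 ≤ z) : 0 ≤ (r:ℂ) * z := by
  rw [Complex.nonneg_iff] at *
  refine ⟨?_, ?_⟩ <;> simp [Complex.mul_re, Complex.mul_im, ← hz.2]
  exact mul_nonneg hr hz.1

lemma real_mul_pos' {r : ℝ} (hr : 0 < r) {z : ℂ} (hz : 0 < z) : 0 < (r:ℂ) * z := by
  rw [Complex.pos_iff] at *
  refine ⟨?_, ?_⟩ <;> simp [Complex.mul_re, Complex.mul_im, ← hz.2]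
  exact mul_pos hr hz.1

lemma dot_sum_mulVec {m d : ℕ} (A : Fin m → Matrix (Fin d) (Fin d) ℂ) (x : Fin d → ℂ) :
    star x ⬝ᵥ (∑ j, A j) *ᵥ x = ∑ j, star x ⬝ᵥ (A j) *ᵥ x := by
  simp only [dotProduct, Matrix.mulVec, Matrix.sum_apply, Finset.mul_sum,
    Finset.sum_mul]
  rw [show (∑ y : Fin d, ∑ x1 : Fin d, ∑ i : Fin m, star x y * (A i y x1 * x x1))
      = ∑ y : Fin d, ∑ i : Fin m, ∑ x1 : Fin d, star x y * (A i y x1 * x x1) from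
    Finset.sum_congr rfl fun _ _ => Finset.sum_comm]
  rw [Finset.sum_comm]

lemma trace_conjT_mul {p q : ℕ} (X Y : Matrix (Fin p) (Fin q) ℂ) :
    Matrix.trace (Xᴴ * Y) = star (Matrix.trace (Yᴴ * X)) := by
  rw [← Matrix.trace_conjTranspose, Matrix.conjTranspose_mul,
    Matrix.conjTranspose_conjTranspose]

/-- for a projective RS `V` with weights `vᵢ`, with
`S_{V,D} = ∑ᵢ P_{range(Vᵢᴴ)}` (positive definite) and
`W₀ = {vᵢ⁻² Vᵢ S_{V,D}⁻¹}`, the system `W₀` is a dual of `V` and it is the unique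
minimizer of the 2-error `(∑ᵢ ‖Wᵢᴴ Vᵢ‖_F²)^{1/2}` over all duals `W` of `V`. -/
theorem unique_optimal_dual_for_two_error
    {d m : ℕ} (k : Fin m → ℕ) (V : ∀ i, Matrix (Fin (k i)) (Fin d) ℂ)
    (v : Fin m → ℝ) (hv : ∀ i, 0 < v i)
    (hproj : ∀ i, V i * (V i)ᴴ = (((v i) ^ 2 : ℝ) : ℂ) • 1)
    (hV : (∑ i, (V i)ᴴ * V i).PosDef)
    -- `P i` is the orthogonal projection onto `range (V i)ᴴ`
    (P : Fin m → Matrix (Fin d) (Fin d) ℂ)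
    (hP : ∀ i, (P i)ᴴ = P i ∧ P i * P i = P i ∧
      LinearMap.range (P i).mulVecLin = LinearMap.range ((V i)ᴴ).mulVecLin)
    (W₀ : ∀ i, Matrix (Fin (k i)) (Fin d) ℂ)
    (hW₀ : ∀ i, W₀ i = ((((v i) ^ 2 : ℝ) : ℂ))⁻¹ • (V i * (∑ j, P j)⁻¹)) :
    (∑ j, P j).PosDef ∧
    (∑ i, (W₀ i)ᴴ * V i) = 1 ∧
    ∀ W : ∀ i, Matrix (Fin (k i)) (Fin d) ℂ, (∑ i, (W i)ᴴ * V i) = 1 →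
      (∑ i, frob ((W₀ i)ᴴ * V i) ^ 2 ≤ ∑ i, frob ((W i)ᴴ * V i) ^ 2) ∧
      ((∑ i, frob ((W i)ᴴ * V i) ^ 2) = (∑ i, frob ((W₀ i)ᴴ * V i) ^ 2) ↔ W = W₀) := by
  have hc : ∀ i, (((v i) ^ 2 : ℝ) : ℂ) ≠ 0 := by
    intro i
    have := (hv i).ne'
    simp [pow_eq_zero_iff]
    exact this
  have hstarc : ∀ i, star ((((v i) ^ 2 : ℝ) : ℂ))⁻¹ = ((((v i) ^ 2 : ℝ) : ℂ))⁻¹ := by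
    intro i
    rw [← Complex.ofReal_inv]
    exact Complex.conj_ofReal _
  -- P i is determined
  have hPQ : ∀ i, P i = ((((v i) ^ 2 : ℝ) : ℂ))⁻¹ • ((V i)ᴴ * V i) := by
    intro i
    set c : ℂ := (((v i) ^ 2 : ℝ) : ℂ) with hcdef
    set Q : Matrix (Fin d) (Fin d) ℂ := c⁻¹ • ((V i)ᴴ * V i) with hQdef
    have hQh : Qᴴ = Q := by
      rw [hQdef, Matrix.conjTranspose_smul, Matrix.conjTranspose_mul,
        Matrix.conjTranspose_conjTranspose, hstarc i]
    have hmid : ((V i)ᴴ * V i) * ((V i)ᴴ * V i) = c • ((V i)ᴴ * V i) := by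
      calc ((V i)ᴴ * V i) * ((V i)ᴴ * V i) = (V i)ᴴ * (V i * (V i)ᴴ) * V i := by
            rw [Matrix.mul_assoc, Matrix.mul_assoc, Matrix.mul_assoc]
        _ = (V i)ᴴ * (c • (1 : Matrix (Fin (k i)) (Fin (k i)) ℂ)) * V i := by rw [hproj i]
        _ = c • ((V i)ᴴ * V i) := by
            rw [Matrix.mul_smul, Matrix.mul_one, Matrix.smul_mul]
    have hQi : Q * Q = Q := by
      rw [hQdef, Matrix.smul_mul, Matrix.mul_smul, hmid, smul_smul, smul_smul,
        inv_mul_cancel_right₀ (hc i)]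
    have hQr : LinearMap.range Q.mulVecLin = LinearMap.range ((V i)ᴴ).mulVecLin := by
      apply le_antisymm
      · have h : Q = (V i)ᴴ * (c⁻¹ • V i) := by rw [hQdef, Matrix.mul_smul]
        rw [h, Matrix.mulVecLin_mul]
        exact LinearMap.range_comp_le_range _ _
      · have h : (V i)ᴴ = Q * (V i)ᴴ := by
          rw [hQdef, Matrix.smul_mul, Matrix.mul_assoc, hproj i, Matrix.mul_smul,
            Matrix.mul_one, smul_smul, inv_mul_cancel₀ (hc i), one_smul]
        conv_lhs => rw [h]
        rw [Matrix.mulVecLin_mul]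
        exact LinearMap.range_comp_le_range _ _
    exact proj_eq_of_range_eq (hP i).1 (hP i).2.1 hQh hQi ((hP i).2.2.trans hQr.symm)
  -- positive definiteness of S
  set S : Matrix (Fin d) (Fin d) ℂ := ∑ j, P j with hSdef
  have hSpd : S.PosDef := by
    rw [Matrix.posDef_iff_dotProduct_mulVec]
    constructor
    · show Sᴴ = S
      rw [hSdef, Matrix.conjTranspose_sum]
      exact Finset.sum_congr rfl fun i _ => (hP i).1
    · intro x hx
      have hpos := (Matrix.posDef_iff_dotProduct_mulVec.1 hV).2 hx
      rw [dot_sum_mulVec] at hpos ⊢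
      set t : Fin m → ℂ := fun j => star x ⬝ᵥ ((V j)ᴴ * V j) *ᵥ x with ht
      have htn : ∀ j, 0 ≤ t j := fun j =>
        (Matrix.posSemidef_conjTranspose_mul_self (V j)).dotProduct_mulVec_nonneg x
      have hex : ∃ j, t j ≠ 0 := by
        by_contra hcon
        push_neg at hcon
        rw [Finset.sum_eq_zero fun j _ => hcon j] at hpos
        exact lt_irrefl _ hpos
      obtain ⟨j0, hj0'⟩ := hex
      have hj0 : 0 < t j0 := (htn j0).lt_of_ne (Ne.symm hj0')
      have heq : ∀ j, star x ⬝ᵥ (P j) *ᵥ x = (((v j ^ 2)⁻¹ : ℝ) : ℂ) * t j := by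
        intro j
        rw [hPQ j, Matrix.smul_mulVec, dotProduct_smul, Complex.ofReal_inv]
        rfl
      calc (0:ℂ) < (((v j0 ^ 2)⁻¹ : ℝ) : ℂ) * t j0 :=
            real_mul_pos' (by have := hv j0; positivity) hj0
        _ ≤ ∑ j, star x ⬝ᵥ (P j) *ᵥ x := by
            simp_rw [heq]
            exact Finset.single_le_sum (f := fun j => (((v j ^ 2)⁻¹ : ℝ) : ℂ) * t j)
              (fun j _ => real_mul_nonneg' (by positivity) (htn j)) (Finset.mem_univ j0)
  have hdet : IsUnit S.det := (Matrix.isUnit_iff_isUnit_det _).1 hSpd.isUnit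
  have hSinv_mul : S⁻¹ * S = 1 := Matrix.nonsing_inv_mul S hdet
  have hSinvH : (S⁻¹)ᴴ = S⁻¹ := hSpd.isHermitian.inv
  -- B i = (W₀ i)ᴴ * V i = S⁻¹ * P i
  have hB : ∀ i, (W₀ i)ᴴ * V i = S⁻¹ * P i := by
    intro i
    rw [hW₀ i, Matrix.conjTranspose_smul, Matrix.conjTranspose_mul, hSinvH, hstarc i,
      Matrix.smul_mul, Matrix.mul_assoc, hPQ i, Matrix.mul_smul]
  have hdual : (∑ i, (W₀ i)ᴴ * V i) = 1 := by
    simp_rw [hB]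
    rw [← Finset.mul_sum, ← hSdef, hSinv_mul]
  refine ⟨hSpd, hdual, ?_⟩
  intro W hW
  -- key trace identity
  have key : ∀ G : Fin m → Matrix (Fin d) (Fin d) ℂ, (∑ i, G i) = 1 →
      (∀ i, G i * P i = G i) →
      ∑ i, Matrix.trace ((S⁻¹ * P i)ᴴ * G i) = Matrix.trace S⁻¹ := by
    intro G hG1 hGP
    have h1 : ∀ i, Matrix.trace ((S⁻¹ * P i)ᴴ * G i) = Matrix.trace (S⁻¹ * G i) := by
      intro i
      rw [Matrix.conjTranspose_mul, (hP i).1, hSinvH, Matrix.mul_assoc,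
        Matrix.trace_mul_comm, Matrix.mul_assoc, hGP i]
    simp_rw [h1]
    rw [← Matrix.trace_sum, ← Finset.mul_sum, hG1, Matrix.mul_one]
  have hVP : ∀ i, V i * P i = V i := by
    intro i
    rw [hPQ i, Matrix.mul_smul, ← Matrix.mul_assoc, hproj i, Matrix.smul_mul,
      Matrix.one_mul, smul_smul, inv_mul_cancel₀ (hc i), one_smul]
  set A : ∀ i, Matrix (Fin d) (Fin d) ℂ := fun i => (W i)ᴴ * V i with hAdef
  set B : ∀ i, Matrix (Fin d) (Fin d) ℂ := fun i => S⁻¹ * P i with hBdef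
  have hAP : ∀ i, A i * P i = A i := fun i => by
    rw [hAdef]; simp only; rw [Matrix.mul_assoc, hVP i]
  have hBP : ∀ i, B i * P i = B i := fun i => by
    rw [hBdef]; simp only; rw [Matrix.mul_assoc, (hP i).2.1]
  have hB1 : (∑ i, B i) = 1 := by
    rw [hBdef, ← Finset.mul_sum, ← hSdef, hSinv_mul]
  have crossA : ∑ i, Matrix.trace ((B i)ᴴ * A i) = Matrix.trace S⁻¹ := key A hW hAP
  have crossB : ∑ i, Matrix.trace ((B i)ᴴ * B i) = Matrix.trace S⁻¹ := key B hB1 hBP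
  -- expansion
  have hstarS : star (Matrix.trace S⁻¹) = Matrix.trace S⁻¹ := by
    rw [← Matrix.trace_conjTranspose, hSinvH]
  have hexp : ∀ i, Matrix.trace ((A i - B i)ᴴ * (A i - B i)) =
      Matrix.trace ((A i)ᴴ * A i) - star (Matrix.trace ((B i)ᴴ * A i))
        - Matrix.trace ((B i)ᴴ * A i) + Matrix.trace ((B i)ᴴ * B i) := by
    intro i
    have hAB : Matrix.trace ((A i)ᴴ * B i) = star (Matrix.trace ((B i)ᴴ * A i)) :=
      trace_conjT_mul (A i) (B i)
    rw [Matrix.conjTranspose_sub, Matrix.sub_mul, Matrix.mul_sub, Matrix.mul_sub,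
      Matrix.trace_sub, Matrix.trace_sub, Matrix.trace_sub, hAB]
    ring
  have hsum : ∑ i, Matrix.trace ((A i - B i)ᴴ * (A i - B i)) =
      ∑ i, Matrix.trace ((A i)ᴴ * A i) - ∑ i, Matrix.trace ((B i)ᴴ * B i) := by
    simp_rw [hexp]
    rw [Finset.sum_add_distrib, Finset.sum_sub_distrib, Finset.sum_sub_distrib,
      ← star_sum, crossA, crossB, hstarS]
    ring
  -- real parts
  have hre : ∑ i, frob (A i - B i) ^ 2 =
      ∑ i, frob (A i) ^ 2 - ∑ i, frob (B i) ^ 2 := by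
    simp_rw [frob_sq]
    rw [← Complex.re_sum, ← Complex.re_sum, ← Complex.re_sum, hsum, Complex.sub_re]
  have hnn : 0 ≤ ∑ i, frob (A i - B i) ^ 2 :=
    Finset.sum_nonneg fun i _ => by rw [frob_sq]; exact retr_nonneg _
  have e1 : ∀ i, (W₀ i)ᴴ * V i = B i := hB
  have e2 : ∀ i, (W i)ᴴ * V i = A i := fun i => rfl
  constructor
  · simp_rw [e1, e2]
    linarith [hre, hnn]
  · constructor
    · intro heq
      simp_rw [e1, e2] at heq
      have hzero : ∑ i, frob (A i - B i) ^ 2 = 0 := by rw [hre]; linarith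
      have hz : ∀ i ∈ Finset.univ, frob (A i - B i) ^ 2 = 0 :=
        (Finset.sum_eq_zero_iff_of_nonneg
          (fun i _ => by rw [frob_sq]; exact retr_nonneg _)).1 hzero
      funext i
      have hABi : A i = B i := by
        have h0 : (Matrix.trace ((A i - B i)ᴴ * (A i - B i))).re = 0 := by
          rw [← frob_sq]; exact hz i (Finset.mem_univ i)
        have := (retr_eq_zero_iff _).1 h0
        exact sub_eq_zero.1 this
      have h4 : (W i)ᴴ * V i = (W₀ i)ᴴ * V i := by rw [e1 i]; exact hABi
      have h5 := congrArg (fun M => M * (V i)ᴴ) h4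
      rw [Matrix.mul_assoc, Matrix.mul_assoc, hproj i, Matrix.mul_smul, Matrix.mul_smul,
        Matrix.mul_one, Matrix.mul_one] at h5
      have h6 := congrArg (fun M => ((((v i) ^ 2 : ℝ) : ℂ))⁻¹ • M) h5
      simp only [smul_smul, inv_mul_cancel₀ (hc i), one_smul] at h6
      have h7 := congrArg Matrix.conjTranspose h6
      rwa [Matrix.conjTranspose_conjTranspose, Matrix.conjTranspose_conjTranspose] at h7
    · intro heq
      rw [heq]
end

section
/- Let V = {V_i}_{i=1}^m be an injective RS for ℂ^d (each V_i surjective). Then the map W ↦ max_i ‖W_i* V_i‖_F is a norm on the space ⊕_i L(ℂ^d, ℂ^{k_i}), and the set of duals W of V minimizing max_i ‖W_i* V_i‖_F is nonempty, compact and convex. -/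
open scoped Matrix ComplexOrder

attribute [local instance] Matrix.frobeniusSeminormedAddCommGroup
  Matrix.frobeniusNormedAddCommGroup Matrix.frobeniusNormedSpace
  Matrix.frobeniusIsBoundedSMul

/-- `frob` agrees with mathlib's Frobenius norm. -/
lemma frob_eq_norm {p q : ℕ} (A : Matrix (Fin p) (Fin q) ℂ) : frob A = ‖A‖ := by
  rw [Matrix.frobenius_norm_def, frob]
  have h : Matrix.trace (Aᴴ * A) = ∑ j, ∑ i, ((‖A i j‖ : ℂ) ^ 2) := by
    simp [Matrix.trace, Matrix.diag, Matrix.mul_apply, Matrix.conjTranspose_apply,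
      RCLike.conj_mul]
  rw [h, Finset.sum_comm]
  rw [Real.sqrt_eq_rpow]
  norm_cast

/-- for an injective RS `V`, the map `W ↦ maxᵢ ‖Wᵢᴴ Vᵢ‖_F` is a norm
on `⊕ᵢ L(ℂ^d, ℂ^{kᵢ})`, and the set of duals of `V` minimizing it is nonempty,
compact and convex. -/
theorem optimal_duals_wce_nonempty_compact_convex
    {d m : ℕ} (hm : 0 < m) (k : Fin m → ℕ)
    (V : ∀ i, Matrix (Fin (k i)) (Fin d) ℂ)
    (hV : (∑ i, (V i)ᴴ * V i).PosDef)
    (hinj : ∀ i, IsUnit (V i * (V i)ᴴ))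
    (N : (∀ i, Matrix (Fin (k i)) (Fin d) ℂ) → ℝ)
    (hN : ∀ W, N W = Finset.univ.sup'
      (Finset.univ_nonempty_iff.mpr ⟨⟨0, hm⟩⟩) (fun i => frob ((W i)ᴴ * V i))) :
    -- `N` is a norm on the space of systems
    ((∀ W, 0 ≤ N W ∧ (N W = 0 ↔ W = 0)) ∧
     (∀ (c : ℂ) W, N (c • W) = ‖c‖ * N W) ∧
     (∀ W W', N (W + W') ≤ N W + N W')) ∧
    -- the set of 1-loss optimal duals is nonempty, compact and convex
    (let D₁ : Set (∀ i, Matrix (Fin (k i)) (Fin d) ℂ) :=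
      {W | (∑ i, (W i)ᴴ * V i) = 1 ∧
        ∀ W' : ∀ i, Matrix (Fin (k i)) (Fin d) ℂ,
          (∑ i, (W' i)ᴴ * V i) = 1 → N W ≤ N W'}
     D₁.Nonempty ∧ IsCompact D₁ ∧ Convex ℝ D₁) := by
  have hne : (Finset.univ : Finset (Fin m)).Nonempty := Finset.univ_nonempty_iff.mpr ⟨⟨0, hm⟩⟩
  have hN' : ∀ W : ∀ i, Matrix (Fin (k i)) (Fin d) ℂ,
      N W = Finset.univ.sup' hne (fun i => ‖(W i)ᴴ * V i‖) := by
    intro W; rw [hN]; exact Finset.sup'_congr hne rfl fun i _ => frob_eq_norm _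
  -- nonnegativity
  have hpos : ∀ W : ∀ i, Matrix (Fin (k i)) (Fin d) ℂ, 0 ≤ N W := fun W => by
    rw [hN']
    exact le_trans (norm_nonneg _)
      (Finset.le_sup' (fun i => ‖(W i)ᴴ * V i‖) (Finset.mem_univ ⟨0, hm⟩))
  -- each term is at most `N W`
  have hle : ∀ (W : ∀ i, Matrix (Fin (k i)) (Fin d) ℂ) i, ‖(W i)ᴴ * V i‖ ≤ N W := fun W i => by
    rw [hN']; exact Finset.le_sup' (fun i => ‖(W i)ᴴ * V i‖) (Finset.mem_univ i)
  -- definiteness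
  have hdef : ∀ W : ∀ i, Matrix (Fin (k i)) (Fin d) ℂ, N W = 0 ↔ W = 0 := by
    intro W
    constructor
    · intro h
      funext i
      have h2 : (W i)ᴴ * V i = 0 :=
        norm_eq_zero.mp (le_antisymm (h ▸ hle W i) (norm_nonneg _))
      have h3 : (W i)ᴴ * (V i * (V i)ᴴ) = 0 := by
        rw [← Matrix.mul_assoc, h2, Matrix.zero_mul]
      have h4 : (W i)ᴴ = 0 := by
        have h5 : (W i)ᴴ * (((hinj i).unit : Matrix (Fin (k i)) (Fin (k i)) ℂ) *
            (((hinj i).unit⁻¹ : _) : Matrix (Fin (k i)) (Fin (k i)) ℂ)) = 0 := by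
          rw [(hinj i).unit_spec, ← Matrix.mul_assoc, h3, Matrix.zero_mul]
        rwa [Units.mul_inv, Matrix.mul_one] at h5
      calc W i = ((W i)ᴴ)ᴴ := (Matrix.conjTranspose_conjTranspose _).symm
        _ = 0 := by rw [h4, Matrix.conjTranspose_zero]
    · rintro rfl
      rw [hN']
      have : ∀ i ∈ Finset.univ, ‖((0 : ∀ i, Matrix (Fin (k i)) (Fin d) ℂ) i)ᴴ * V i‖ = 0 := by
        intro i _
        simp
      rw [Finset.sup'_congr hne rfl this]
      exact Finset.sup'_const hne 0
  -- homogeneity (complex scalars)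
  have hhomog : ∀ (c : ℂ) (W : ∀ i, Matrix (Fin (k i)) (Fin d) ℂ), N (c • W) = ‖c‖ * N W := by
    intro c W
    rw [hN', hN']
    have hterm : ∀ i ∈ Finset.univ, ‖((c • W) i)ᴴ * V i‖ = ‖c‖ * ‖(W i)ᴴ * V i‖ := by
      intro i _
      have h1 : ((c • W) i)ᴴ * V i = star c • ((W i)ᴴ * V i) := by
        rw [Pi.smul_apply, Matrix.conjTranspose_smul, Matrix.smul_mul]
      rw [h1, norm_smul, norm_star]
    rw [Finset.sup'_congr hne rfl hterm]
    exact (Finset.comp_sup'_eq_sup'_comp hne (fun x => ‖c‖ * x)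
      (fun x y => by simpa using mul_max_of_nonneg x y (norm_nonneg c))).symm
  -- real scalars distribute termwise
  have htermR : ∀ (a : ℝ) (W : ∀ i, Matrix (Fin (k i)) (Fin d) ℂ) (i : Fin m),
      ((a • W) i)ᴴ * V i = a • ((W i)ᴴ * V i) := by
    intro a W i
    rw [Pi.smul_apply, Matrix.conjTranspose_smul, star_trivial, Matrix.smul_mul]
  -- triangle inequality
  have htri : ∀ W W' : ∀ i, Matrix (Fin (k i)) (Fin d) ℂ, N (W + W') ≤ N W + N W' := by
    intro W W'
    rw [hN' (W + W')]
    apply Finset.sup'_le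
    intro i _
    have h1 : ((W + W') i)ᴴ * V i = (W i)ᴴ * V i + (W' i)ᴴ * V i := by
      rw [Pi.add_apply, Matrix.conjTranspose_add, Matrix.add_mul]
    rw [h1]
    exact le_trans (norm_add_le _ _) (add_le_add (hle W i) (hle W' i))
  refine ⟨⟨fun W => ⟨hpos W, hdef W⟩, hhomog, htri⟩, ?_⟩
  -- upper bound: N W ≤ K * ‖W‖
  set K : ℝ := Finset.univ.sup' hne (fun i => ‖V i‖) with hK
  have hK0 : 0 ≤ K :=
    le_trans (norm_nonneg _) (Finset.le_sup' (fun i => ‖V i‖) (Finset.mem_univ ⟨0, hm⟩))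
  have hVK : ∀ i, ‖V i‖ ≤ K := fun i => Finset.le_sup' (fun i => ‖V i‖) (Finset.mem_univ i)
  have hNle : ∀ W : ∀ i, Matrix (Fin (k i)) (Fin d) ℂ, N W ≤ K * ‖W‖ := by
    intro W
    rw [hN']
    apply Finset.sup'_le
    intro i _
    calc ‖(W i)ᴴ * V i‖ ≤ ‖(W i)ᴴ‖ * ‖V i‖ := Matrix.frobenius_norm_mul _ _
      _ = ‖V i‖ * ‖W i‖ := by rw [Matrix.frobenius_norm_conjTranspose, mul_comm]
      _ ≤ K * ‖W‖ := mul_le_mul (hVK i) (norm_le_pi_norm W i) (norm_nonneg _) hK0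
  -- continuity of N
  have hsub : ∀ a b : ∀ i, Matrix (Fin (k i)) (Fin d) ℂ, N a ≤ N b + K * ‖a - b‖ := by
    intro a b
    have h0 : a = b + (a - b) := by abel
    calc N a = N (b + (a - b)) := by rw [← h0]
      _ ≤ N b + N (a - b) := htri _ _
      _ ≤ N b + K * ‖a - b‖ := by linarith [hNle (a - b)]
  have hcontN : Continuous N := by
    refine (LipschitzWith.of_dist_le_mul (K := Real.toNNReal K) fun a b => ?_).continuous
    rw [Real.dist_eq, dist_eq_norm, Real.coe_toNNReal K hK0, abs_sub_le_iff]
    have h1 := hsub a b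
    have h2 := hsub b a
    rw [show b - a = -(a - b) by abel, norm_neg] at h2
    constructor <;> linarith
  -- lower bound: ‖W‖ ≤ C * N W
  set C : ℝ := Finset.univ.sup' hne
    (fun i => ‖(V i)ᴴ * (((hinj i).unit⁻¹ : _) : Matrix (Fin (k i)) (Fin (k i)) ℂ)‖) with hC
  have hC0 : 0 ≤ C :=
    le_trans (norm_nonneg _) (Finset.le_sup'
      (fun i => ‖(V i)ᴴ * (((hinj i).unit⁻¹ : _) : Matrix (Fin (k i)) (Fin (k i)) ℂ)‖)
      (Finset.mem_univ (⟨0, hm⟩ : Fin m)))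
  have hCle : ∀ i, ‖(V i)ᴴ * (((hinj i).unit⁻¹ : _) : Matrix (Fin (k i)) (Fin (k i)) ℂ)‖ ≤ C :=
    fun i => Finset.le_sup'
      (fun i => ‖(V i)ᴴ * (((hinj i).unit⁻¹ : _) : Matrix (Fin (k i)) (Fin (k i)) ℂ)‖)
      (Finset.mem_univ i)
  have hCb : ∀ W : ∀ i, Matrix (Fin (k i)) (Fin d) ℂ, ‖W‖ ≤ C * N W := by
    intro W
    refine (pi_norm_le_iff_of_nonneg (mul_nonneg hC0 (hpos W))).mpr fun i => ?_
    have key : ((W i)ᴴ * V i) *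
        ((V i)ᴴ * (((hinj i).unit⁻¹ : _) : Matrix (Fin (k i)) (Fin (k i)) ℂ)) = (W i)ᴴ := by
      calc ((W i)ᴴ * V i) * ((V i)ᴴ * (((hinj i).unit⁻¹ : _) : Matrix (Fin (k i)) (Fin (k i)) ℂ))
          = (W i)ᴴ * ((V i * (V i)ᴴ) *
            (((hinj i).unit⁻¹ : _) : Matrix (Fin (k i)) (Fin (k i)) ℂ)) := by
            simp only [Matrix.mul_assoc]
        _ = (W i)ᴴ * (((hinj i).unit : Matrix (Fin (k i)) (Fin (k i)) ℂ) *
            (((hinj i).unit⁻¹ : _) : Matrix (Fin (k i)) (Fin (k i)) ℂ)) := by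
            rw [(hinj i).unit_spec]
        _ = (W i)ᴴ := by rw [Units.mul_inv, Matrix.mul_one]
    calc ‖W i‖ = ‖(W i)ᴴ‖ := (Matrix.frobenius_norm_conjTranspose _).symm
      _ = ‖((W i)ᴴ * V i) *
          ((V i)ᴴ * (((hinj i).unit⁻¹ : _) : Matrix (Fin (k i)) (Fin (k i)) ℂ))‖ := by rw [key]
      _ ≤ ‖(W i)ᴴ * V i‖ *
          ‖(V i)ᴴ * (((hinj i).unit⁻¹ : _) : Matrix (Fin (k i)) (Fin (k i)) ℂ)‖ :=
          Matrix.frobenius_norm_mul _ _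
      _ ≤ N W * C := mul_le_mul (hle W i) (hCle i) (norm_nonneg _) (hpos W)
      _ = C * N W := mul_comm _ _
  -- the affine set of duals
  set D : Set (∀ i, Matrix (Fin (k i)) (Fin d) ℂ) := {W | (∑ i, (W i)ᴴ * V i) = 1} with hD
  -- D is closed
  have hLsub : ∀ a b : ∀ i, Matrix (Fin (k i)) (Fin d) ℂ,
      (∑ i, (a i)ᴴ * V i) - (∑ i, (b i)ᴴ * V i) = ∑ i, ((a - b) i)ᴴ * V i := by
    intro a b
    rw [← Finset.sum_sub_distrib]
    refine Finset.sum_congr rfl fun i _ => ?_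
    rw [Pi.sub_apply, Matrix.conjTranspose_sub, Matrix.sub_mul]
  have hLcont : Continuous (fun W : ∀ i, Matrix (Fin (k i)) (Fin d) ℂ => ∑ i, (W i)ᴴ * V i) := by
    refine (LipschitzWith.of_dist_le_mul (K := m * Real.toNNReal K) fun a b => ?_).continuous
    rw [dist_eq_norm, dist_eq_norm, hLsub a b]
    push_cast
    rw [Real.coe_toNNReal K hK0]
    calc ‖∑ i, ((a - b) i)ᴴ * V i‖ ≤ ∑ i, ‖((a - b) i)ᴴ * V i‖ := norm_sum_le _ _
      _ ≤ ∑ _i : Fin m, K * ‖a - b‖ := by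
          refine Finset.sum_le_sum fun i _ => ?_
          calc ‖((a - b) i)ᴴ * V i‖ ≤ ‖((a - b) i)ᴴ‖ * ‖V i‖ := Matrix.frobenius_norm_mul _ _
            _ = ‖V i‖ * ‖(a - b) i‖ := by rw [Matrix.frobenius_norm_conjTranspose, mul_comm]
            _ ≤ K * ‖a - b‖ := mul_le_mul (hVK i) (norm_le_pi_norm _ i) (norm_nonneg _) hK0
      _ = m * K * ‖a - b‖ := by
          rw [Finset.sum_const, Finset.card_univ]
          simp [mul_assoc]
  have hDclosed : IsClosed D := isClosed_singleton.preimage hLcont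
  -- canonical dual, so D is nonempty
  have hW₀D : (fun i => V i * (∑ j, (V j)ᴴ * V j)⁻¹) ∈ D := by
    set S : Matrix (Fin d) (Fin d) ℂ := ∑ j, (V j)ᴴ * V j with hS
    have hSdet : IsUnit S.det := (Matrix.isUnit_iff_isUnit_det S).mp hV.isUnit
    have hSinv : S⁻¹ * S = 1 := Matrix.nonsing_inv_mul S hSdet
    have hSH : S⁻¹ᴴ = S⁻¹ := (hV.1.inv : (S⁻¹).IsHermitian)
    show (∑ i, (V i * S⁻¹)ᴴ * V i) = 1
    have h6 : ∀ i ∈ Finset.univ, (V i * S⁻¹)ᴴ * V i = S⁻¹ * ((V i)ᴴ * V i) := by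
      intro i _
      rw [Matrix.conjTranspose_mul, hSH, Matrix.mul_assoc]
    rw [Finset.sum_congr rfl h6, ← Finset.mul_sum, ← hS, hSinv]
  -- sublevel sets of N within D are compact
  haveI : ProperSpace (∀ i, Matrix (Fin (k i)) (Fin d) ℂ) :=
    FiniteDimensional.proper ℂ (∀ i, Matrix (Fin (k i)) (Fin d) ℂ)
  have hcomp : ∀ r : ℝ, IsCompact (D ∩ {W | N W ≤ r}) := by
    intro r
    refine Metric.isCompact_of_isClosed_isBounded
      (hDclosed.inter (isClosed_le hcontN continuous_const)) ?_
    refine (Metric.isBounded_closedBall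
      (x := (0 : ∀ i, Matrix (Fin (k i)) (Fin d) ℂ)) (r := C * max r 0)).subset ?_
    rintro W ⟨_, hWr⟩
    rw [Metric.mem_closedBall, dist_zero_right]
    calc ‖W‖ ≤ C * N W := hCb W
      _ ≤ C * max r 0 :=
        mul_le_mul_of_nonneg_left (le_trans hWr (le_max_left _ _)) hC0
  -- a minimizer exists
  set W₀ : ∀ i, Matrix (Fin (k i)) (Fin d) ℂ :=
    fun i => V i * (∑ j, (V j)ᴴ * V j)⁻¹ with hW₀
  obtain ⟨Wm, hWmmem, hWmmin'⟩ :=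
    (hcomp (N W₀)).exists_isMinOn ⟨W₀, hW₀D, show N W₀ ≤ N W₀ from le_refl _⟩ hcontN.continuousOn
  have hWmD : Wm ∈ D := hWmmem.1
  have hWmmin : ∀ W' : ∀ i, Matrix (Fin (k i)) (Fin d) ℂ,
      (∑ i, (W' i)ᴴ * V i) = 1 → N Wm ≤ N W' := by
    intro W' hW'
    by_cases h : N W' ≤ N W₀
    · exact isMinOn_iff.mp hWmmin' W' ⟨hW', h⟩
    · exact le_trans (isMinOn_iff.mp hWmmin' W₀ ⟨hW₀D, show N W₀ ≤ N W₀ from le_refl _⟩) (le_of_not_ge h)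
  refine ⟨⟨Wm, hWmD, hWmmin⟩, ?_, ?_⟩
  · -- compactness of D₁
    have hD₁eq : {W : ∀ i, Matrix (Fin (k i)) (Fin d) ℂ | (∑ i, (W i)ᴴ * V i) = 1 ∧
        ∀ W' : ∀ i, Matrix (Fin (k i)) (Fin d) ℂ, (∑ i, (W' i)ᴴ * V i) = 1 → N W ≤ N W'}
        = D ∩ {W | N W ≤ N Wm} := by
      ext W
      constructor
      · rintro ⟨h1, h2⟩; exact ⟨h1, h2 Wm hWmD⟩
      · rintro ⟨h1, h2⟩; exact ⟨h1, fun W' hW' => le_trans h2 (hWmmin W' hW')⟩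
    exact hD₁eq ▸ hcomp (N Wm)
  · -- convexity of D₁
    rintro W ⟨hW1, hW2⟩ W' ⟨hW'1, hW'2⟩ a b ha hb hab
    have hcomb : ∀ i, ((a • W + b • W') i)ᴴ * V i
        = a • ((W i)ᴴ * V i) + b • ((W' i)ᴴ * V i) := by
      intro i
      rw [Pi.add_apply, Matrix.conjTranspose_add, Matrix.add_mul, htermR a W i, htermR b W' i]
    constructor
    · show (∑ i, ((a • W + b • W') i)ᴴ * V i) = 1
      rw [Finset.sum_congr rfl fun i _ => hcomb i, Finset.sum_add_distrib,
        ← Finset.smul_sum, ← Finset.smul_sum, hW1, hW'1, ← add_smul, hab, one_smul]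
    · intro W'' hW''
      have h1 : N (a • W + b • W') ≤ a * N W + b * N W' := by
        rw [hN']
        apply Finset.sup'_le
        intro i _
        rw [hcomb i]
        refine le_trans (norm_add_le _ _) ?_
        rw [norm_smul, norm_smul, Real.norm_of_nonneg ha, Real.norm_of_nonneg hb]
        exact add_le_add (mul_le_mul_of_nonneg_left (hle W i) ha)
          (mul_le_mul_of_nonneg_left (hle W' i) hb)
      have h2 := hW2 W'' hW''
      have h3 := hW'2 W'' hW''
      have h4 : a * N W'' + b * N W'' = N W'' := by rw [← add_mul, hab, one_mul]
      linarith [mul_le_mul_of_nonneg_left h2 ha, mul_le_mul_of_nonneg_left h3 hb]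
end

section
/- Let V = {V_i}_{i=1}^m be a projective protocol for ℂ^d (S_V = I) such that ‖V_i* V_i‖_F = v_i² √(k_i) is constant in i. Then V is its own canonical dual, and it is the unique dual minimizing the worst-case error max_i ‖W_i* V_i‖_F. -/
open scoped Matrix ComplexOrder ComplexInnerProductSpace

noncomputable def toE {k d : ℕ} (A : Matrix (Fin k) (Fin d) ℂ) :
    EuclideanSpace ℂ (Fin k × Fin d) := WithLp.toLp 2 (fun p => A p.1 p.2)

lemma inner_toE {k d : ℕ} (A B : Matrix (Fin k) (Fin d) ℂ) :
    ⟪toE A, toE B⟫ = Matrix.trace (Aᴴ * B) := by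
  simp [toE, PiLp.inner_apply, Matrix.trace, Matrix.diag, Matrix.mul_apply,
    Matrix.conjTranspose_apply, Fintype.sum_prod_type, mul_comm]
  rw [Finset.sum_comm]

lemma norm_toE {k d : ℕ} (A : Matrix (Fin k) (Fin d) ℂ) :
    ‖toE A‖ = frob A := by
  rw [frob, norm_eq_sqrt_re_inner (𝕜 := ℂ), inner_toE]
  simp

lemma frob_nonneg {m n : ℕ} (A : Matrix (Fin m) (Fin n) ℂ) : 0 ≤ frob A :=
  Real.sqrt_nonneg _

lemma trX {k d : ℕ} (Vi : Matrix (Fin k) (Fin d) ℂ) (vi : ℝ)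
    (hproj : Vi * Viᴴ = ((vi ^ 2 : ℝ) : ℂ) • 1) :
    Matrix.trace (Viᴴ * Vi) = ((vi ^ 2 * k : ℝ) : ℂ) := by
  rw [Matrix.trace_mul_comm, hproj, Matrix.trace_smul, Matrix.trace_one]
  simp [Fintype.card_fin, smul_eq_mul]

lemma key {k d : ℕ} (Vi : Matrix (Fin k) (Fin d) ℂ) (vi : ℝ) (hvi : 0 < vi)
    (hproj : Vi * Viᴴ = ((vi ^ 2 : ℝ) : ℂ) • 1) (W : Matrix (Fin k) (Fin d) ℂ) :
    ‖Matrix.trace (Wᴴ * Vi)‖ ≤ frob (Wᴴ * Vi) * Real.sqrt k ∧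
    (0 < k → Matrix.trace (Wᴴ * Vi) = ((vi ^ 2 * k : ℝ) : ℂ) →
      ‖Matrix.trace (Wᴴ * Vi)‖ = frob (Wᴴ * Vi) * Real.sqrt k → W = Vi) := by
  set a : ℂ := ((vi ^ 2 : ℝ) : ℂ) with ha
  have ha0 : a ≠ 0 := Complex.ofReal_ne_zero.mpr (by positivity)
  set X : Matrix (Fin d) (Fin d) ℂ := Viᴴ * Vi with hX
  set Y : Matrix (Fin d) (Fin d) ℂ := Wᴴ * Vi with hY
  have gen : ∀ U : Matrix (Fin k) (Fin d) ℂ, (Uᴴ * Vi) * X = a • (Uᴴ * Vi) := by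
    intro U
    rw [hX, Matrix.mul_assoc, ← Matrix.mul_assoc Vi Viᴴ Vi, hproj,
      Matrix.smul_mul, Matrix.one_mul, Matrix.mul_smul]
  have htrX : Matrix.trace X = a * k := by
    rw [hX, trX Vi vi hproj, ha]; push_cast; ring
  set Q : Matrix (Fin d) (Fin d) ℂ := a⁻¹ • X with hQ
  have hQherm : Qᴴ = Q := by
    rw [hQ, Matrix.conjTranspose_smul, hX, Matrix.conjTranspose_mul,
      Matrix.conjTranspose_conjTranspose]
    congr 1
    simp [ha, ← Complex.ofReal_inv]
  have hinnerQY : ⟪toE Q, toE Y⟫ = Matrix.trace Y := by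
    rw [inner_toE, hQherm, hQ, Matrix.smul_mul, Matrix.trace_smul,
      Matrix.trace_mul_comm, hY, gen W, Matrix.trace_smul]
    field_simp
    rw [smul_smul, one_div, inv_mul_cancel₀ ha0, one_smul]
  have hinnerQQ : ⟪toE Q, toE Q⟫ = (k : ℂ) := by
    rw [inner_toE, hQherm, hQ, Matrix.smul_mul, Matrix.mul_smul, smul_smul,
      show X * X = a • X from by
        have := gen Vi; rwa [← hX] at this]
    rw [Matrix.trace_smul, Matrix.trace_smul, htrX, smul_eq_mul, smul_eq_mul]
    field_simp
  have hnormQ : ‖toE Q‖ = Real.sqrt k := by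
    rw [norm_eq_sqrt_re_inner (𝕜 := ℂ), hinnerQQ]; simp
  have hnormY : ‖toE Y‖ = frob Y := norm_toE Y
  have hCS : ‖Matrix.trace Y‖ ≤ frob Y * Real.sqrt k := by
    rw [← hinnerQY]
    calc ‖⟪toE Q, toE Y⟫‖ ≤ ‖toE Q‖ * ‖toE Y‖ := norm_inner_le_norm _ _
      _ = frob Y * Real.sqrt k := by rw [hnormQ, hnormY, mul_comm]
  refine ⟨hCS, ?_⟩
  intro hk htr heq
  have hk' : (0 : ℝ) < Real.sqrt k := Real.sqrt_pos.mpr (by exact_mod_cast hk)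
  have hQ0 : toE Q ≠ 0 := by
    intro h
    rw [h, norm_zero] at hnormQ
    exact hk'.ne hnormQ
  have hY0 : toE Y ≠ 0 := by
    intro h
    have h0 : Matrix.trace Y = 0 := by rw [← hinnerQY, h, inner_zero_right]
    rw [htr, Complex.ofReal_eq_zero] at h0
    have : (0:ℝ) < vi ^ 2 * k := by
      have : (0:ℝ) < (k:ℝ) := by exact_mod_cast hk
      positivity
    linarith
  have heq2 : ‖⟪toE Q, toE Y⟫‖ = ‖toE Q‖ * ‖toE Y‖ := by
    rw [hinnerQY, hnormQ, hnormY, heq, mul_comm]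
  obtain ⟨r, hr0, hrY⟩ := (norm_inner_eq_norm_iff hQ0 hY0).mp heq2
  have hYQr : Y = r • Q := by
    ext x y
    have := congrArg (fun z => z (x, y)) hrY
    simpa [toE] using this
  have htrQ : Matrix.trace Q = (k : ℂ) := by
    rw [hQ, Matrix.trace_smul, htrX, smul_eq_mul]
    field_simp
  have hkC : (k : ℂ) ≠ 0 := Nat.cast_ne_zero.mpr hk.ne'
  have hr : r = a := by
    have h1 : Matrix.trace Y = r * k := by rw [hYQr, Matrix.trace_smul, htrQ, smul_eq_mul]
    rw [htr] at h1
    have h2 : a * (k : ℂ) = r * k := by rw [← h1, ha]; push_cast; ring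
    exact (mul_right_cancel₀ hkC h2).symm
  have hYX' : Y = X := by
    rw [hYQr, hr, hQ, smul_smul, mul_inv_cancel₀ ha0, one_smul]
  have h6 : Wᴴ * Vi * Viᴴ = Viᴴ * Vi * Viᴴ := by
    rw [← hY, ← hX, hYX']
  rw [Matrix.mul_assoc, Matrix.mul_assoc, hproj, Matrix.mul_smul, Matrix.mul_smul,
    Matrix.mul_one, Matrix.mul_one] at h6
  have h7 : Wᴴ = Viᴴ := smul_right_injective _ ha0 h6
  calc W = Wᴴᴴ := (Matrix.conjTranspose_conjTranspose W).symm
    _ = Viᴴᴴ := by rw [h7]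
    _ = Vi := Matrix.conjTranspose_conjTranspose Vi

/-- a projective protocol (`S_V = I`) with
`‖Vᵢᴴ Vᵢ‖_F = vᵢ² √kᵢ = c` constant in `i` is its own canonical dual, and it is
the unique dual minimizing the worst-case error `maxᵢ ‖Wᵢᴴ Vᵢ‖_F`. -/
theorem projective_protocol_self_dual_optimal_wce
    {d m : ℕ} (hm : 0 < m) (k : Fin m → ℕ)
    (V : ∀ i, Matrix (Fin (k i)) (Fin d) ℂ)
    (v : Fin m → ℝ) (hv : ∀ i, 0 < v i)
    (hproj : ∀ i, V i * (V i)ᴴ = (((v i) ^ 2 : ℝ) : ℂ) • 1)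
    (hprot : (∑ i, (V i)ᴴ * V i) = 1)
    (c : ℝ)
    (hconst : ∀ i, frob ((V i)ᴴ * V i) = c)
    (hval : ∀ i, frob ((V i)ᴴ * V i) = (v i) ^ 2 * Real.sqrt (k i))
    (N : (∀ i, Matrix (Fin (k i)) (Fin d) ℂ) → ℝ)
    (hN : ∀ W, N W = Finset.univ.sup'
      (Finset.univ_nonempty_iff.mpr ⟨⟨0, hm⟩⟩) (fun i => frob ((W i)ᴴ * V i))) :
    -- `V` is its own canonical dual
    (∀ i, V i * (∑ j, (V j)ᴴ * V j)⁻¹ = V i) ∧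
    (∑ i, (V i)ᴴ * V i) = 1 ∧
    (∀ W : ∀ i, Matrix (Fin (k i)) (Fin d) ℂ, (∑ i, (W i)ᴴ * V i) = 1 →
      N V ≤ N W) ∧
    (∀ W : ∀ i, Matrix (Fin (k i)) (Fin d) ℂ, (∑ i, (W i)ᴴ * V i) = 1 →
      (∀ W' : ∀ i, Matrix (Fin (k i)) (Fin d) ℂ,
        (∑ i, (W' i)ᴴ * V i) = 1 → N W ≤ N W') → W = V) := by
  have hd : ∀ W : ∀ i, Matrix (Fin (k i)) (Fin d) ℂ, (∑ i, (W i)ᴴ * V i) = 1 →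
      (d : ℝ) = ∑ i, (Matrix.trace ((W i)ᴴ * V i)).re := by
    intro W hdual
    have h1 : Matrix.trace (∑ i, (W i)ᴴ * V i) = (d : ℂ) := by
      rw [hdual, Matrix.trace_one]; simp
    rw [Matrix.trace_sum] at h1
    have h2 := congrArg Complex.re h1
    rw [Complex.re_sum] at h2
    simpa using h2.symm
  have hcq : ∀ i, c * Real.sqrt (k i) = (v i) ^ 2 * (k i) := by
    intro i
    rw [← hconst i, hval i, mul_assoc, Real.mul_self_sqrt (Nat.cast_nonneg _)]
  have hcd : c * (∑ i, Real.sqrt (k i)) = d := by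
    rw [Finset.mul_sum, hd V hprot]
    refine Finset.sum_congr rfl fun i _ => ?_
    rw [hcq i, trX (V i) (v i) (hproj i), Complex.ofReal_re]
  have hNW_lb : ∀ W : ∀ i, Matrix (Fin (k i)) (Fin d) ℂ,
      (∑ i, (W i)ᴴ * V i) = 1 → c ≤ N W := by
    intro W hdual
    have hb : ∀ i, frob ((W i)ᴴ * V i) ≤ N W := by
      intro i; rw [hN]
      exact Finset.le_sup' (fun j => frob ((W j)ᴴ * V j)) (Finset.mem_univ i)
    have hNn : 0 ≤ N W := le_trans (frob_nonneg _) (hb ⟨0, hm⟩)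
    have hchain : (d : ℝ) ≤ N W * ∑ i, Real.sqrt (k i) := by
      rw [hd W hdual, Finset.mul_sum]
      refine Finset.sum_le_sum fun i _ => ?_
      calc (Matrix.trace ((W i)ᴴ * V i)).re
          ≤ ‖Matrix.trace ((W i)ᴴ * V i)‖ := by
            exact Complex.re_le_norm _
        _ ≤ frob ((W i)ᴴ * V i) * Real.sqrt (k i) :=
            (key (V i) (v i) (hv i) (hproj i) (W i)).1
        _ ≤ N W * Real.sqrt (k i) :=
            mul_le_mul_of_nonneg_right (hb i) (Real.sqrt_nonneg _)
    rcases eq_or_lt_of_le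
        (Finset.sum_nonneg (fun i _ => Real.sqrt_nonneg ((k i : ℕ) : ℝ))) with hs | hs
    · have h0 : Real.sqrt (k ⟨0, hm⟩) = 0 :=
        (Finset.sum_eq_zero_iff_of_nonneg
          (fun i _ => Real.sqrt_nonneg ((k i : ℕ) : ℝ))).mp hs.symm ⟨0, hm⟩ (Finset.mem_univ _)
      have hc0 : c = 0 := by rw [← hconst ⟨0, hm⟩, hval, h0, mul_zero]
      rw [hc0]; exact hNn
    · have h2 : c * (∑ i, Real.sqrt (k i)) ≤ N W * (∑ i, Real.sqrt (k i)) := by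
        rw [hcd]; exact hchain
      exact le_of_mul_le_mul_right h2 hs
  have hNV : N V = c := by
    rw [hN]
    apply le_antisymm
    · exact Finset.sup'_le _ (fun i => frob ((V i)ᴴ * V i))
        (fun i _ => le_of_eq (hconst i))
    · calc c = frob ((V ⟨0, hm⟩)ᴴ * V ⟨0, hm⟩) := (hconst _).symm
        _ ≤ _ := Finset.le_sup' (fun j => frob ((V j)ᴴ * V j)) (Finset.mem_univ _)
  refine ⟨fun i => by rw [hprot, inv_one, Matrix.mul_one], hprot,
    fun W hdual => by rw [hNV]; exact hNW_lb W hdual, ?_⟩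
  intro W hdual hopt
  have hWle : N W ≤ c := hNV ▸ hopt V hprot
  have hb : ∀ i, frob ((W i)ᴴ * V i) ≤ c := by
    intro i
    refine le_trans ?_ hWle
    rw [hN]; exact Finset.le_sup' (fun j => frob ((W j)ᴴ * V j)) (Finset.mem_univ i)
  have hfg : ∀ i ∈ Finset.univ,
      (Matrix.trace ((W i)ᴴ * V i)).re ≤ c * Real.sqrt (k i) := by
    intro i _
    calc (Matrix.trace ((W i)ᴴ * V i)).re
        ≤ ‖Matrix.trace ((W i)ᴴ * V i)‖ := by
          exact Complex.re_le_norm _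
      _ ≤ frob ((W i)ᴴ * V i) * Real.sqrt (k i) :=
          (key (V i) (v i) (hv i) (hproj i) (W i)).1
      _ ≤ c * Real.sqrt (k i) :=
          mul_le_mul_of_nonneg_right (hb i) (Real.sqrt_nonneg _)
  have hsum : ∑ i, (Matrix.trace ((W i)ᴴ * V i)).re = ∑ i, c * Real.sqrt (k i) := by
    rw [← hd W hdual, ← Finset.mul_sum, hcd]
  have heach := (Finset.sum_eq_sum_iff_of_le hfg).mp hsum
  funext i
  by_cases hk : k i = 0
  · ext x y
    exact absurd x.isLt (by simp [hk])
  · have hkpos : 0 < k i := Nat.pos_of_ne_zero hk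
    have hre : (Matrix.trace ((W i)ᴴ * V i)).re = c * Real.sqrt (k i) :=
      heach i (Finset.mem_univ i)
    have htub : ‖Matrix.trace ((W i)ᴴ * V i)‖ ≤ c * Real.sqrt (k i) :=
      le_trans (key (V i) (v i) (hv i) (hproj i) (W i)).1
        (mul_le_mul_of_nonneg_right (hb i) (Real.sqrt_nonneg _))
    have hnorm_eq : ‖Matrix.trace ((W i)ᴴ * V i)‖ = c * Real.sqrt (k i) := by
      refine le_antisymm htub ?_
      rw [← hre]; exact Complex.re_le_norm _
    have him : (Matrix.trace ((W i)ᴴ * V i)).im = 0 := by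
      have h2 : ‖Matrix.trace ((W i)ᴴ * V i)‖ ^ 2
          = (Matrix.trace ((W i)ᴴ * V i)).re ^ 2
            + (Matrix.trace ((W i)ᴴ * V i)).im ^ 2 := by
        rw [Complex.sq_norm, Complex.normSq_apply]; ring
      have h4 : ‖Matrix.trace ((W i)ᴴ * V i)‖ ^ 2 = (c * Real.sqrt (k i)) ^ 2 := by
        rw [hnorm_eq]
      have h5 : (Matrix.trace ((W i)ᴴ * V i)).re ^ 2 = (c * Real.sqrt (k i)) ^ 2 := by
        rw [hre]
      have h6 : (Matrix.trace ((W i)ᴴ * V i)).im ^ 2 = 0 := by linarith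
      exact pow_eq_zero_iff (n := 2) (by norm_num) |>.mp h6
    have htr : Matrix.trace ((W i)ᴴ * V i) = (((v i) ^ 2 * (k i) : ℝ) : ℂ) := by
      apply Complex.ext
      · rw [hre, hcq i, Complex.ofReal_re]
      · rw [him, Complex.ofReal_im]
    have heqCS : ‖Matrix.trace ((W i)ᴴ * V i)‖
        = frob ((W i)ᴴ * V i) * Real.sqrt (k i) := by
      refine le_antisymm (key (V i) (v i) (hv i) (hproj i) (W i)).1 ?_
      rw [hnorm_eq]
      exact mul_le_mul_of_nonneg_right (hb i) (Real.sqrt_nonneg _)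
    exact (key (V i) (v i) (hv i) (hproj i) (W i)).2 hkpos htr heqCS
end

section
/- Let V = {V_i}_{i=1}^m be an RS for ℂ^d, J ⊂ {1,…,m}, and M_J = I - ∑_{i∈J} V_i* V_i S_V^{-1}. Then the truncated system V_J = {V_i}_{i∉J} is an RS for ℂ^d if and only if M_J is invertible, and in that case S_{V_J} = M_J S_V. -/
open scoped Matrix ComplexOrder

lemma posDef_of_posSemidef_isUnit {n : ℕ} {A : Matrix (Fin n) (Fin n) ℂ}
    (hA : A.PosSemidef) (hU : IsUnit A) : A.PosDef := by
  refine Matrix.PosDef.of_dotProduct_mulVec_pos hA.1 fun x hx => ?_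
  refine lt_of_le_of_ne (hA.dotProduct_mulVec_nonneg x) ?_
  intro h
  rw [eq_comm, hA.dotProduct_mulVec_zero_iff] at h
  apply hx
  have : A⁻¹ *ᵥ (A *ᵥ x) = x := by
    rw [Matrix.mulVec_mulVec, Matrix.nonsing_inv_mul _ (Matrix.isUnit_iff_isUnit_det _ |>.mp hU), Matrix.one_mulVec]
  rw [h, Matrix.mulVec_zero] at this
  exact this.symm

/-- for an RS `V` and `J ⊆ {1,…,m}`, with
`M_J = I - ∑_{i∈J} Vᵢᴴ Vᵢ S_V⁻¹`, the truncated system `V_J = {Vᵢ}_{i∉J}` is an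
RS iff `M_J` is invertible, and in that case `S_{V_J} = M_J S_V`. -/
theorem truncated_rs_iff_MJ_invertible
    {d m : ℕ} (k : Fin m → ℕ) (V : ∀ i, Matrix (Fin (k i)) (Fin d) ℂ)
    (hV : (∑ i, (V i)ᴴ * V i).PosDef)
    (J : Finset (Fin m))
    (M : Matrix (Fin d) (Fin d) ℂ)
    (hM : M = 1 - (∑ i ∈ J, (V i)ᴴ * V i) * (∑ i, (V i)ᴴ * V i)⁻¹) :
    ((∑ i ∈ Jᶜ, (V i)ᴴ * V i).PosDef ↔ IsUnit M) ∧
    (∑ i ∈ Jᶜ, (V i)ᴴ * V i) = M * (∑ i, (V i)ᴴ * V i) := by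
  set S := ∑ i, (V i)ᴴ * V i with hS
  have hSunit : IsUnit S := hV.isUnit
  have hSdet : IsUnit S.det := (Matrix.isUnit_iff_isUnit_det _).mp hSunit
  have hsplit : (∑ i ∈ Jᶜ, (V i)ᴴ * V i) = S - ∑ i ∈ J, (V i)ᴴ * V i := by
    rw [hS, ← Finset.sum_add_sum_compl J fun i => (V i)ᴴ * V i, add_sub_cancel_left]
  have key : (∑ i ∈ Jᶜ, (V i)ᴴ * V i) = M * S := by
    rw [hM, sub_mul, one_mul, mul_assoc, Matrix.nonsing_inv_mul _ hSdet, mul_one, hsplit]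
  refine ⟨⟨fun h => ?_, fun h => ?_⟩, key⟩
  · have := h.isUnit
    rw [key] at this
    have hinv : IsUnit S⁻¹ := hV.inv.isUnit
    have : IsUnit (M * S * S⁻¹) := this.mul hinv
    rwa [mul_assoc, Matrix.mul_nonsing_inv _ hSdet, mul_one] at this
  · have hps : (∑ i ∈ Jᶜ, (V i)ᴴ * V i).PosSemidef := by
      refine Finset.sum_induction _ _ (fun a b ha hb => ha.add hb) Matrix.PosSemidef.zero
        (fun i _ => Matrix.posSemidef_conjTranspose_mul_self _)
    exact posDef_of_posSemidef_isUnit hps (by rw [key]; exact h.mul hSunit)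
end

section
/- Let V = {V_i}_{i=1}^m be an RS for ℂ^d with bounds A_V = λ_min(S_V), B_V = ‖S_V‖, and let J ⊂ {1,…,m} with M_J = I - ∑_{i∈J} V_i* V_i S_V^{-1} invertible. Then the bounds of the RS V_J = {V_i}_{i∉J} satisfy A_V / ‖M_J^{-1}‖ ≤ A_{V_J} and B_{V_J} ≤ B_V. Moreover, the canonical dual of V_J is {V_i S_V^{-1} M_J^{-1}}_{i∉J}. -/
open scoped Matrix ComplexOrder
open Matrix

set_option maxHeartbeats 1000000
set_option synthInstance.maxHeartbeats 200000

/-- The ℓ²-operator norm of a (rectangular) complex matrix. -/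
noncomputable def opn {m n : ℕ} (A : Matrix (Fin m) (Fin n) ℂ) : ℝ :=
  ‖LinearMap.toContinuousLinearMap (Matrix.toEuclideanLin A)‖

lemma opn_mulVec_le {n : ℕ} (A : Matrix (Fin n) (Fin n) ℂ) (x : Fin n → ℂ) :
    ‖(WithLp.equiv 2 (Fin n → ℂ)).symm (A *ᵥ x)‖ ≤
      opn A * ‖(WithLp.equiv 2 (Fin n → ℂ)).symm x‖ := by
  have := (LinearMap.toContinuousLinearMap (Matrix.toEuclideanLin A)).le_opNorm
      ((WithLp.equiv 2 (Fin n → ℂ)).symm x)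
  simpa [opn, Matrix.toEuclideanLin_apply] using this

-- quadratic form representation
lemma qform_repr {n : Type*} [Fintype n] [DecidableEq n] {A : Matrix n n ℂ}
    (hA : A.IsHermitian) (x : n → ℂ) :
    Complex.re (star x ⬝ᵥ (A *ᵥ x)) =
      ∑ i, hA.eigenvalues i *
        Complex.normSq ((star (hA.eigenvectorUnitary : Matrix n n ℂ) *ᵥ x) i) ∧
    Complex.re (star x ⬝ᵥ x) =
      ∑ i, Complex.normSq ((star (hA.eigenvectorUnitary : Matrix n n ℂ) *ᵥ x) i) := by
  set U : Matrix n n ℂ := (hA.eigenvectorUnitary : Matrix n n ℂ) with hU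
  set w : n → ℂ := star U *ᵥ x with hw
  have hsw : star x ᵥ* U = star w := by
    rw [hw, star_mulVec]
    simp [Matrix.star_eq_conjTranspose]
  constructor
  · conv_lhs => rw [hA.spectral_theorem]
    rw [Unitary.conjStarAlgAut_apply, ← hU]
    rw [← Matrix.mulVec_mulVec, ← Matrix.mulVec_mulVec, Matrix.dotProduct_mulVec, hsw, ← hw]
    rw [dotProduct, Complex.re_sum]
    refine Finset.sum_congr rfl fun i _ => ?_
    simp [Matrix.mulVec_diagonal, Complex.normSq_apply, Complex.mul_re]
    ring
  · have h1 : star x ⬝ᵥ x = star w ⬝ᵥ w := by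
      rw [hw, Matrix.dotProduct_mulVec, ← hw, ← hsw, Matrix.vecMul_vecMul,
        (Matrix.mem_unitaryGroup_iff).mp hA.eigenvectorUnitary.2, Matrix.vecMul_one]
    rw [h1, dotProduct, Complex.re_sum]
    refine Finset.sum_congr rfl fun i _ => ?_
    simp [Complex.normSq_apply, Complex.mul_re]

lemma qform_le {n : Type*} [Fintype n] [DecidableEq n] [Nonempty n] {A : Matrix n n ℂ}
    (hA : A.IsHermitian) (x : n → ℂ) :
    Complex.re (star x ⬝ᵥ (A *ᵥ x)) ≤ (⨆ i, hA.eigenvalues i) * Complex.re (star x ⬝ᵥ x) := by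
  obtain ⟨h1, h2⟩ := qform_repr hA x
  rw [h1, h2, Finset.mul_sum]
  refine Finset.sum_le_sum fun i _ => ?_
  exact mul_le_mul_of_nonneg_right (le_ciSup (Set.Finite.bddAbove (Set.finite_range _)) i)
    (Complex.normSq_nonneg _)

lemma le_qform {n : Type*} [Fintype n] [DecidableEq n] [Nonempty n] {A : Matrix n n ℂ}
    (hA : A.IsHermitian) (x : n → ℂ) :
    (⨅ i, hA.eigenvalues i) * Complex.re (star x ⬝ᵥ x) ≤ Complex.re (star x ⬝ᵥ (A *ᵥ x)) := by
  obtain ⟨h1, h2⟩ := qform_repr hA x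
  rw [h1, h2, Finset.mul_sum]
  refine Finset.sum_le_sum fun i _ => ?_
  exact mul_le_mul_of_nonneg_right (ciInf_le (Set.Finite.bddBelow (Set.finite_range _)) i)
    (Complex.normSq_nonneg _)

lemma re_dot_self {n : ℕ} (x : Fin n → ℂ) :
    Complex.re (star x ⬝ᵥ x) = ‖(WithLp.equiv 2 (Fin n → ℂ)).symm x‖ ^ 2 := by
  have h : inner ℂ ((WithLp.equiv 2 (Fin n → ℂ)).symm x) ((WithLp.equiv 2 (Fin n → ℂ)).symm x) =
      star x ⬝ᵥ x := (EuclideanSpace.inner_toLp_toLp x x).trans (dotProduct_comm _ _)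
  rw [← h]
  have h2 := inner_self_eq_norm_sq (𝕜 := ℂ) ((WithLp.equiv 2 (Fin n → ℂ)).symm x)
  simpa [RCLike.re_to_complex] using h2

lemma re_dot_mulVec_le {n : ℕ} (A : Matrix (Fin n) (Fin n) ℂ) (x : Fin n → ℂ) :
    Complex.re (star x ⬝ᵥ (A *ᵥ x)) ≤ opn A * ‖(WithLp.equiv 2 (Fin n → ℂ)).symm x‖ ^ 2 := by
  have h : inner ℂ ((WithLp.equiv 2 (Fin n → ℂ)).symm x) ((WithLp.equiv 2 (Fin n → ℂ)).symm (A *ᵥ x)) =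
      star x ⬝ᵥ (A *ᵥ x) := (EuclideanSpace.inner_toLp_toLp x (A *ᵥ x)).trans (dotProduct_comm _ _)
  rw [← h]
  refine le_trans (Complex.re_le_norm _) ?_
  have h2 := norm_inner_le_norm (𝕜 := ℂ) ((WithLp.equiv 2 (Fin n → ℂ)).symm x)
      ((WithLp.equiv 2 (Fin n → ℂ)).symm (A *ᵥ x))
  refine h2.trans ?_
  have h3 := opn_mulVec_le A x
  have hx : (0:ℝ) ≤ ‖(WithLp.equiv 2 (Fin n → ℂ)).symm x‖ := norm_nonneg _
  nlinarith [mul_le_mul_of_nonneg_left h3 hx]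

/-- bounds of the truncated RS `V_J` and its canonical dual.
Here `A_V = λ_min(S_V)` and `B_V = ‖S_V‖` are expressed through the eigenvalues
of the Hermitian matrix `S_V` (for a positive definite matrix the spectral norm
is the largest eigenvalue). -/
theorem truncated_rs_bounds_and_canonical_dual
    {d m : ℕ} (k : Fin m → ℕ) (V : ∀ i, Matrix (Fin (k i)) (Fin d) ℂ)
    (hV : (∑ i, (V i)ᴴ * V i).PosDef)
    (J : Finset (Fin m))
    (M : Matrix (Fin d) (Fin d) ℂ)
    (hM : M = 1 - (∑ i ∈ J, (V i)ᴴ * V i) * (∑ i, (V i)ᴴ * V i)⁻¹)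
    (hMJ : IsUnit M)
    (hSJ : (∑ i ∈ Jᶜ, (V i)ᴴ * V i).PosDef) :
    (⨅ i, hV.1.eigenvalues i) / opn M⁻¹ ≤ (⨅ i, hSJ.1.eigenvalues i) ∧
    (⨆ i, hSJ.1.eigenvalues i) ≤ (⨆ i, hV.1.eigenvalues i) ∧
    ∀ i ∉ J, V i * (∑ j ∈ Jᶜ, (V j)ᴴ * V j)⁻¹ =
      V i * (∑ j, (V j)ᴴ * V j)⁻¹ * M⁻¹ := by
  have hSdet : IsUnit (∑ i, (V i)ᴴ * V i).det :=
    (Matrix.isUnit_iff_isUnit_det _).mp hV.isUnit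
  have hMdet : IsUnit M.det := (Matrix.isUnit_iff_isUnit_det _).mp hMJ
  have hsum : (∑ i ∈ J, (V i)ᴴ * V i) + (∑ i ∈ Jᶜ, (V i)ᴴ * V i) = ∑ i, (V i)ᴴ * V i :=
    Finset.sum_add_sum_compl J _
  have hMS : M * (∑ i, (V i)ᴴ * V i) = ∑ i ∈ Jᶜ, (V i)ᴴ * V i := by
    rw [hM, sub_mul, one_mul, mul_assoc, Matrix.nonsing_inv_mul _ hSdet, mul_one,
      sub_eq_iff_eq_add, ← hsum, add_comm]
  have hSeq : (∑ i, (V i)ᴴ * V i) = M⁻¹ * (∑ i ∈ Jᶜ, (V i)ᴴ * V i) := by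
    rw [← hMS, ← Matrix.mul_assoc, Matrix.nonsing_inv_mul _ hMdet, Matrix.one_mul]
  refine ⟨?_, ?_, ?_⟩
  · -- lower bound
    rcases Nat.eq_zero_or_pos d with hd | hd
    · subst hd
      simp [Real.iInf_of_isEmpty]
    have hne : Nonempty (Fin d) := ⟨⟨0, hd⟩⟩
    -- opn M⁻¹ > 0
    have hMinv_ne : M⁻¹ ≠ 0 := by
      intro h0
      have h1 : M⁻¹ * M = 1 := Matrix.nonsing_inv_mul _ hMdet
      rw [h0, Matrix.zero_mul] at h1
      have := congrFun (congrFun h1 ⟨0, hd⟩) ⟨0, hd⟩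
      simp [Matrix.one_apply_eq] at this
    have hopn : 0 < opn M⁻¹ := by
      rw [opn, norm_pos_iff]
      intro h0
      apply hMinv_ne
      exact (LinearEquiv.map_eq_zero_iff Matrix.toEuclideanLin).mp
        ((LinearEquiv.map_eq_zero_iff (LinearMap.toContinuousLinearMap (𝕜 := ℂ))).mp h0)
    refine le_ciInf fun i => ?_
    rw [div_le_iff₀ hopn]
    set v : Fin d → ℂ := ⇑(hSJ.1.eigenvectorBasis i) with hv
    have hnorm : ‖(WithLp.equiv 2 (Fin d → ℂ)).symm v‖ = 1 := by
      have := hSJ.1.eigenvectorBasis.orthonormal.1 i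
      exact this
    have hvv : Complex.re (star v ⬝ᵥ v) = 1 := by
      rw [re_dot_self, hnorm]; norm_num
    have heig : (∑ j ∈ Jᶜ, (V j)ᴴ * V j) *ᵥ v = hSJ.1.eigenvalues i • v :=
      hSJ.1.mulVec_eigenvectorBasis i
    have hlamnn : 0 ≤ hSJ.1.eigenvalues i := hSJ.posSemidef.eigenvalues_nonneg i
    have hSv : (∑ j, (V j)ᴴ * V j) *ᵥ v = hSJ.1.eigenvalues i • (M⁻¹ *ᵥ v) := by
      rw [hSeq, ← Matrix.mulVec_mulVec, heig, Matrix.mulVec_smul]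
    have key : (⨅ j, hV.1.eigenvalues j) ≤ hSJ.1.eigenvalues i * opn M⁻¹ := by
      have h1 := le_qform hV.1 v
      rw [hvv, mul_one, hSv] at h1
      have h2 : Complex.re (star v ⬝ᵥ hSJ.1.eigenvalues i • (M⁻¹ *ᵥ v)) =
          hSJ.1.eigenvalues i * Complex.re (star v ⬝ᵥ (M⁻¹ *ᵥ v)) := by
        rw [dotProduct_smul]
        simp [Complex.smul_re]
      rw [h2] at h1
      refine h1.trans ?_
      refine mul_le_mul_of_nonneg_left ?_ hlamnn
      have := re_dot_mulVec_le M⁻¹ v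
      rwa [hnorm, one_pow, mul_one] at this
    exact key
  · -- upper bound
    rcases Nat.eq_zero_or_pos d with hd | hd
    · subst hd
      simp [Real.iSup_of_isEmpty]
    have hne : Nonempty (Fin d) := ⟨⟨0, hd⟩⟩
    refine ciSup_le fun i => ?_
    set v : Fin d → ℂ := ⇑(hSJ.1.eigenvectorBasis i) with hv
    have hnorm : ‖(WithLp.equiv 2 (Fin d → ℂ)).symm v‖ = 1 :=
      hSJ.1.eigenvectorBasis.orthonormal.1 i
    have hvv : Complex.re (star v ⬝ᵥ v) = 1 := by
      rw [re_dot_self, hnorm]; norm_num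
    have heq : hSJ.1.eigenvalues i = Complex.re (star v ⬝ᵥ ((∑ j ∈ Jᶜ, (V j)ᴴ * V j) *ᵥ v)) :=
      hSJ.1.eigenvalues_eq i
    have hpsd : (∑ j ∈ J, (V j)ᴴ * V j).PosSemidef := by
      refine Finset.sum_induction _ _ (fun a b ha hb => ha.add hb) ?_ ?_
      · exact Matrix.PosSemidef.zero
      · exact fun j _ => Matrix.posSemidef_conjTranspose_mul_self (V j)
    have hmono : Complex.re (star v ⬝ᵥ ((∑ j ∈ Jᶜ, (V j)ᴴ * V j) *ᵥ v)) ≤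
        Complex.re (star v ⬝ᵥ ((∑ j, (V j)ᴴ * V j) *ᵥ v)) := by
      have h0 : 0 ≤ Complex.re (star v ⬝ᵥ ((∑ j ∈ J, (V j)ᴴ * V j) *ᵥ v)) := by
        have := hpsd.re_dotProduct_nonneg v
        simpa [RCLike.re_to_complex] using this
      rw [← hsum, Matrix.add_mulVec, dotProduct_add, Complex.add_re]
      linarith
    have hle := qform_le hV.1 v
    rw [hvv, mul_one] at hle
    rw [heq]
    exact hmono.trans hle
  · -- canonical dual
    intro i _
    rw [← hMS, Matrix.mul_inv_rev, Matrix.mul_assoc]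
end

section
/- Let V = {V_i}_{i=1}^m be an RS for ℂ^d with lower bound A_V = λ_min(S_V), and J ⊂ {1,…,m} with ∑_{i∈J} ‖V_i‖² < A_V (operator norms). Then M_J = I - ∑_{i∈J} V_i* V_i S_V^{-1} is invertible, so V_J = {V_i}_{i∉J} is an RS, and its lower bound satisfies A_{V_J} ≥ A_V - ∑_{i∈J} ‖V_i‖². -/
open scoped Matrix ComplexOrder

open Matrix

lemma quad_le_opn {k d : ℕ} (A : Matrix (Fin k) (Fin d) ℂ) :
    (((opn A ^ 2 : ℝ) : ℂ) • (1 : Matrix (Fin d) (Fin d) ℂ) - Aᴴ * A).PosSemidef := by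
  refine Matrix.posSemidef_iff_dotProduct_mulVec.mpr ⟨?_, ?_⟩
  · simp [Matrix.IsHermitian, conjTranspose_sub, conjTranspose_smul, Matrix.conjTranspose_mul,
      Complex.conj_ofReal]
  · intro x
    have hx : ((((opn A ^ 2 : ℝ) : ℂ)) • (1 : Matrix (Fin d) (Fin d) ℂ) - Aᴴ * A) *ᵥ x
        = ((opn A ^ 2 : ℝ) : ℂ) • x - Aᴴ *ᵥ (A *ᵥ x) := by
      rw [Matrix.sub_mulVec, Matrix.smul_mulVec, Matrix.one_mulVec, ← Matrix.mulVec_mulVec]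
    rw [hx, dotProduct_sub, dotProduct_smul]
    have h2 : star x ⬝ᵥ (Aᴴ *ᵥ (A *ᵥ x)) = star (A *ᵥ x) ⬝ᵥ (A *ᵥ x) := by
      rw [Matrix.dotProduct_mulVec, Matrix.star_mulVec]
    rw [h2]
    have hxx : star x ⬝ᵥ x = ((‖(WithLp.equiv 2 (Fin d → ℂ)).symm x‖ ^ 2 : ℝ) : ℂ) := by
      rw [WithLp.equiv_symm_apply, dotProduct_comm, ← EuclideanSpace.inner_toLp_toLp, inner_self_eq_norm_sq_to_K]
      norm_cast
    have hyy : star (A *ᵥ x) ⬝ᵥ (A *ᵥ x)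
        = ((‖(WithLp.equiv 2 (Fin k → ℂ)).symm (A *ᵥ x)‖ ^ 2 : ℝ) : ℂ) := by
      rw [WithLp.equiv_symm_apply, dotProduct_comm, ← EuclideanSpace.inner_toLp_toLp, inner_self_eq_norm_sq_to_K]
      norm_cast
    rw [hxx, hyy, smul_eq_mul]
    set X := (WithLp.equiv 2 (Fin d → ℂ)).symm x
    set Y := (WithLp.equiv 2 (Fin k → ℂ)).symm (A *ᵥ x)
    have hYX : ‖Y‖ ≤ opn A * ‖X‖ := by
      have : Y = LinearMap.toContinuousLinearMap (Matrix.toEuclideanLin A) X := by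
        simp [X, Y, WithLp.equiv_symm_apply, Matrix.toEuclideanLin_apply_piLp_toLp]
      rw [this]
      exact (LinearMap.toContinuousLinearMap (Matrix.toEuclideanLin A)).le_opNorm X
    have hfin : ‖Y‖ ^ 2 ≤ opn A ^ 2 * ‖X‖ ^ 2 := by
      nlinarith [norm_nonneg Y, norm_nonneg X, opn A, norm_nonneg (LinearMap.toContinuousLinearMap (Matrix.toEuclideanLin A))]
    rw [← Complex.ofReal_mul, ← Complex.ofReal_sub, Complex.zero_le_real]
    linarith

lemma sub_inf_smul_posSemidef {d : ℕ} [Nonempty (Fin d)] {A : Matrix (Fin d) (Fin d) ℂ}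
    (hA : A.IsHermitian) :
    (A - ((⨅ i, hA.eigenvalues i : ℝ) : ℂ) • 1).PosSemidef := by
  set c : ℝ := ⨅ i, hA.eigenvalues i with hc
  have h1 : A - (c : ℂ) • 1 = (hA.eigenvectorUnitary : Matrix (Fin d) (Fin d) ℂ) *
      Matrix.diagonal (fun i => ((hA.eigenvalues i - c : ℝ) : ℂ)) *
      (hA.eigenvectorUnitary : Matrix (Fin d) (Fin d) ℂ)ᴴ := by
    have hd : Matrix.diagonal (fun i => ((hA.eigenvalues i - c : ℝ) : ℂ))
        = Matrix.diagonal (RCLike.ofReal ∘ hA.eigenvalues) - (c : ℂ) • 1 := by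
      rw [Matrix.smul_one_eq_diagonal, Matrix.diagonal_sub]
      funext i
      simp [Complex.ofReal_sub]
    rw [hd, Matrix.mul_sub, Matrix.sub_mul]
    have hU : (hA.eigenvectorUnitary : Matrix (Fin d) (Fin d) ℂ) *
        (hA.eigenvectorUnitary : Matrix (Fin d) (Fin d) ℂ)ᴴ = 1 := by
      rw [← Matrix.star_eq_conjTranspose]
      exact (Matrix.mem_unitaryGroup_iff).mp hA.eigenvectorUnitary.2
    rw [Matrix.mul_smul, Matrix.mul_one, Matrix.smul_mul, hU]
    congr 1
    conv_lhs => rw [hA.spectral_theorem]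
    rw [Unitary.conjStarAlgAut_apply, Matrix.star_eq_conjTranspose]
  rw [h1]
  apply Matrix.PosSemidef.mul_mul_conjTranspose_same
  refine Matrix.posSemidef_diagonal_iff.mpr fun i => ?_
  rw [Complex.zero_le_real, sub_nonneg, hc]
  exact ciInf_le (Finite.bddBelow_range _) i

lemma inf_le_of_posSemidef_sub {d : ℕ} {B : Matrix (Fin d) (Fin d) ℂ} (hB : B.IsHermitian)
    {c : ℝ} (h : (B - (c : ℂ) • 1).PosSemidef) (i : Fin d) : c ≤ hB.eigenvalues i := by
  have hv := hB.eigenvalues_eq i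
  set v : Fin d → ℂ := ⇑(hB.eigenvectorBasis i) with hvdef
  have h1 : star v ⬝ᵥ v = 1 := by
    rw [hvdef, dotProduct_comm, ← EuclideanSpace.inner_eq_star_dotProduct, inner_self_eq_norm_sq_to_K,
      hB.eigenvectorBasis.orthonormal.1 i]
    norm_num
  have h2 := h.dotProduct_mulVec_nonneg v
  rw [Matrix.sub_mulVec, Matrix.smul_mulVec, Matrix.one_mulVec, dotProduct_sub,
    dotProduct_smul, h1, smul_eq_mul, mul_one] at h2
  rw [Complex.le_def] at h2
  have h3 : 0 ≤ (star v ⬝ᵥ B *ᵥ v).re - c := by simpa using h2.1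
  rw [hv]
  simpa using h3

/-- if `∑_{i∈J} ‖Vᵢ‖² < A_V = λ_min(S_V)`, then
`M_J = I - ∑_{i∈J} Vᵢᴴ Vᵢ S_V⁻¹` is invertible, so `V_J` is an RS, and its lower
bound satisfies `A_{V_J} ≥ A_V - ∑_{i∈J} ‖Vᵢ‖²`. -/
theorem truncated_rs_sufficient_condition
    {d m : ℕ} (k : Fin m → ℕ) (V : ∀ i, Matrix (Fin (k i)) (Fin d) ℂ)
    (hV : (∑ i, (V i)ᴴ * V i).PosDef)
    (J : Finset (Fin m))
    (hJ : (∑ i ∈ J, opn (V i) ^ 2) < ⨅ i, hV.1.eigenvalues i)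
    (M : Matrix (Fin d) (Fin d) ℂ)
    (hM : M = 1 - (∑ i ∈ J, (V i)ᴴ * V i) * (∑ i, (V i)ᴴ * V i)⁻¹) :
    IsUnit M ∧
    ∃ hSJ : (∑ i ∈ Jᶜ, (V i)ᴴ * V i).PosDef,
      (⨅ i, hV.1.eigenvalues i) - (∑ i ∈ J, opn (V i) ^ 2) ≤
        ⨅ i, hSJ.1.eigenvalues i := by
  rcases Nat.eq_zero_or_pos d with hd | hd
  · exfalso
    haveI : IsEmpty (Fin d) := by subst hd; infer_instance
    rw [Real.iInf_of_isEmpty] at hJ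
    exact absurd hJ (not_lt.2 (Finset.sum_nonneg fun i _ => sq_nonneg _))
  haveI : Nonempty (Fin d) := ⟨⟨0, hd⟩⟩
  set S := ∑ i, (V i)ᴴ * V i with hSdef
  set T := ∑ i ∈ J, (V i)ᴴ * V i with hTdef
  set SJ := ∑ i ∈ Jᶜ, (V i)ᴴ * V i with hSJdef
  have hsum : T + SJ = S := Finset.sum_add_sum_compl J _
  set c := ∑ i ∈ J, opn (V i) ^ 2 with hcdef
  set A0 := ⨅ i, hV.1.eigenvalues i with hA0def
  -- Step 1 : c • 1 - T is PSD
  have h1 : ((c : ℂ) • 1 - T).PosSemidef := by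
    have heq : (c : ℂ) • (1 : Matrix (Fin d) (Fin d) ℂ) - T
        = ∑ i ∈ J, (((opn (V i) ^ 2 : ℝ) : ℂ) • 1 - (V i)ᴴ * V i) := by
      rw [Finset.sum_sub_distrib]
      congr 1
      rw [← Finset.sum_smul]
      norm_cast
    rw [heq]
    exact Finset.sum_induction _ _ (fun a b ha hb => ha.add hb) .zero
      (fun i _ => quad_le_opn (V i))
  -- Step 2 : S - A0 • 1 is PSD
  have h2 : (S - (A0 : ℂ) • 1).PosSemidef := sub_inf_smul_posSemidef hV.1
  -- Step 3
  have h3 : (SJ - ((A0 - c : ℝ) : ℂ) • 1).PosSemidef := by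
    have heq : SJ - ((A0 - c : ℝ) : ℂ) • 1 = (S - (A0 : ℂ) • 1) + ((c : ℂ) • 1 - T) := by
      rw [Complex.ofReal_sub, sub_smul, ← hsum]
      abel
    rw [heq]
    exact h2.add h1
  have hpos : (((A0 - c : ℝ) : ℂ) • (1 : Matrix (Fin d) (Fin d) ℂ)).PosDef := by
    rw [Matrix.smul_one_eq_diagonal]
    exact Matrix.posDef_diagonal_iff.mpr fun i => Complex.zero_lt_real.mpr (sub_pos.2 hJ)
  have hSJpos : SJ.PosDef := by
    have := Matrix.PosDef.posSemidef_add h3 hpos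
    rwa [sub_add_cancel] at this
  refine ⟨?_, hSJpos, le_ciInf fun i => inf_le_of_posSemidef_sub hSJpos.1 h3 i⟩
  have hdet : IsUnit S.det := isUnit_iff_ne_zero.2 hV.det_pos.ne'
  have hT : T = S - SJ := by rw [← hsum, add_sub_cancel_right]
  have hMeq : M = SJ * S⁻¹ := by
    rw [hM, hT, Matrix.sub_mul, Matrix.mul_nonsing_inv _ hdet, sub_sub_cancel]
  rw [hMeq]
  exact hSJpos.isUnit.mul hV.inv.isUnit
end

section
/- Let k ≤ n and A ∈ ℂ^{n×k} have full rank k, with polar decomposition A = U|A| where U ∈ ℂ^{n×k} is an isometry (U*U = I_k). Then ‖A - U‖_F = min over all isometries V ∈ ℂ^{n×k} of ‖A - V‖_F. -/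
open scoped Matrix ComplexOrder

/-- The square root of a positive semidefinite matrix, as `Matrix.PosSemidef.sqrt` was
defined in Mathlib (December 2024); that definition has since been removed. -/
noncomputable def Matrix.PosSemidef.sqrt {n 𝕜 : Type*} [Fintype n] [RCLike 𝕜] [DecidableEq n]
    {A : Matrix n n 𝕜} (hA : Matrix.PosSemidef A) : Matrix n n 𝕜 :=
  hA.1.eigenvectorUnitary.1 * Matrix.diagonal ((↑) ∘ (√·) ∘ hA.1.eigenvalues) *
  (star hA.1.eigenvectorUnitary : Matrix n n 𝕜)
theorem Matrix.PosSemidef.sqrt_mul_self {n 𝕜 : Type*} [Fintype n] [RCLike 𝕜] [DecidableEq n]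
    {A : Matrix n n 𝕜} (hA : Matrix.PosSemidef A) : hA.sqrt * hA.sqrt = A := by
  conv_rhs => rw [hA.1.spectral_theorem, Unitary.conjStarAlgAut_apply]
  unfold Matrix.PosSemidef.sqrt
  have hu : (star hA.1.eigenvectorUnitary : Matrix n n 𝕜) * hA.1.eigenvectorUnitary.1 = 1 :=
    Unitary.coe_star_mul_self _
  rw [show hA.1.eigenvectorUnitary.1 * Matrix.diagonal ((↑) ∘ (√·) ∘ hA.1.eigenvalues) *
    (star hA.1.eigenvectorUnitary : Matrix n n 𝕜) * (hA.1.eigenvectorUnitary.1 *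
    Matrix.diagonal ((↑) ∘ (√·) ∘ hA.1.eigenvalues) * (star hA.1.eigenvectorUnitary : Matrix n n 𝕜))
    = hA.1.eigenvectorUnitary.1 * (Matrix.diagonal ((↑) ∘ (√·) ∘ hA.1.eigenvalues) *
    ((star hA.1.eigenvectorUnitary : Matrix n n 𝕜) * hA.1.eigenvectorUnitary.1) *
    Matrix.diagonal ((↑) ∘ (√·) ∘ hA.1.eigenvalues)) * (star hA.1.eigenvectorUnitary : Matrix n n 𝕜)
    by simp only [Matrix.mul_assoc], hu, Matrix.mul_one, Matrix.diagonal_mul_diagonal]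
  congr 3
  funext i
  simp only [Function.comp_apply]
  rw [← RCLike.ofReal_mul, Real.mul_self_sqrt (hA.eigenvalues_nonneg i)]
theorem Matrix.PosSemidef.posSemidef_sqrt {n 𝕜 : Type*} [Fintype n] [RCLike 𝕜] [DecidableEq n]
    {A : Matrix n n 𝕜} (hA : Matrix.PosSemidef A) : hA.sqrt.PosSemidef := by
  unfold Matrix.PosSemidef.sqrt
  rw [Matrix.star_eq_conjTranspose]
  apply Matrix.PosSemidef.mul_mul_conjTranspose_same
  rw [Matrix.posSemidef_diagonal_iff]
  intro i
  simp only [Function.comp_apply]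
  exact_mod_cast Real.sqrt_nonneg _


variable {k n : ℕ}

lemma trace_conjTranspose_mul (X Y : Matrix (Fin n) (Fin k) ℂ) :
    Matrix.trace (Xᴴ * Y) = ∑ p : Fin n × Fin k, star (X p.1 p.2) * Y p.1 p.2 := by
  rw [Fintype.sum_prod_type]
  simp only [Matrix.trace, Matrix.mul_apply, Matrix.conjTranspose_apply, Matrix.diag]
  rw [Finset.sum_comm]

lemma frob_sq_s15 (X : Matrix (Fin n) (Fin k) ℂ) :
    (Matrix.trace (Xᴴ * X)).re = ∑ p : Fin n × Fin k, ‖X p.1 p.2‖ ^ 2 := by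
  rw [trace_conjTranspose_mul, Complex.re_sum]
  congr 1; ext p
  rw [Complex.star_def, mul_comm, Complex.mul_conj']
  norm_cast

lemma trace_re_nonneg (X : Matrix (Fin n) (Fin k) ℂ) :
    0 ≤ (Matrix.trace (Xᴴ * X)).re := by
  rw [frob_sq_s15]
  positivity

lemma cs (X Y : Matrix (Fin n) (Fin k) ℂ) :
    (Matrix.trace (Xᴴ * Y)).re ≤ frob X * frob Y := by
  let x : EuclideanSpace ℂ (Fin n × Fin k) := WithLp.toLp 2 fun p : Fin n × Fin k => X p.1 p.2
  let y : EuclideanSpace ℂ (Fin n × Fin k) := WithLp.toLp 2 fun p : Fin n × Fin k => Y p.1 p.2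
  have h1 : inner ℂ x y = Matrix.trace (Xᴴ * Y) := by
    rw [trace_conjTranspose_mul]
    simp [PiLp.inner_apply, x, y, mul_comm]
  have h2 : ‖x‖ = frob X := by
    rw [EuclideanSpace.norm_eq, frob, frob_sq_s15]
  have h3 : ‖y‖ = frob Y := by
    rw [EuclideanSpace.norm_eq, frob, frob_sq_s15]
  calc (Matrix.trace (Xᴴ * Y)).re = (inner ℂ x y).re := by rw [h1]
    _ ≤ ‖inner ℂ x y‖ := Complex.re_le_norm _
    _ ≤ ‖x‖ * ‖y‖ := norm_inner_le_norm x y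
    _ = frob X * frob Y := by rw [h2, h3]

lemma expand_sub (A V : Matrix (Fin n) (Fin k) ℂ) (hV : Vᴴ * V = 1) :
    (Matrix.trace ((A - V)ᴴ * (A - V))).re
      = (Matrix.trace (Aᴴ * A)).re + k - 2 * (Matrix.trace (Vᴴ * A)).re := by
  have h1 : (A - V)ᴴ * (A - V) = Aᴴ * A - Aᴴ * V - Vᴴ * A + Vᴴ * V := by
    rw [Matrix.conjTranspose_sub, Matrix.sub_mul, Matrix.mul_sub, Matrix.mul_sub]; abel
  have h2 : (Matrix.trace (Aᴴ * V)).re = (Matrix.trace (Vᴴ * A)).re := by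
    rw [show Aᴴ * V = (Vᴴ * A)ᴴ by simp [Matrix.conjTranspose_mul],
      Matrix.trace_conjTranspose]
    simp
  rw [h1, hV, Matrix.trace_add, Matrix.trace_sub, Matrix.trace_sub, Matrix.trace_one]
  simp [Complex.add_re, Complex.sub_re, h2]
  ring

/-- if `A ∈ ℂ^{n×k}` (`k ≤ n`) has full rank and polar
decomposition `A = U |A|` with `U` an isometry, then `U` is a Frobenius-norm best
isometric approximation of `A`. -/
theorem polar_isometry_best_approximation
    {k n : ℕ} (hkn : k ≤ n) (A : Matrix (Fin n) (Fin k) ℂ)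
    (hrank : A.rank = k)
    (U : Matrix (Fin n) (Fin k) ℂ) (hU : Uᴴ * U = 1)
    (hpolar : A = U * (Matrix.posSemidef_conjTranspose_mul_self A).sqrt) :
    ∀ W : Matrix (Fin n) (Fin k) ℂ, Wᴴ * W = 1 → frob (A - U) ≤ frob (A - W) := by
  intro W hW
  set P := (Matrix.posSemidef_conjTranspose_mul_self A).sqrt with hPdef
  have hP : P.PosSemidef := (Matrix.posSemidef_conjTranspose_mul_self A).posSemidef_sqrt
  set Q := hP.sqrt with hQdef
  have hQ : Q * Q = P := hP.sqrt_mul_self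
  have hQh : Qᴴ = Q := hP.posSemidef_sqrt.1
  have hUA : Uᴴ * A = P := by rw [hpolar, ← Matrix.mul_assoc, hU, Matrix.one_mul]
  have hsq : ∀ V : Matrix (Fin n) (Fin k) ℂ, Vᴴ * V = 1 →
      (V * Q)ᴴ * (V * Q) = P := by
    intro V hV
    rw [Matrix.conjTranspose_mul, hQh, Matrix.mul_assoc, ← Matrix.mul_assoc Vᴴ V Q,
      hV, Matrix.one_mul, hQ]
  have hPtr : Matrix.trace P = Matrix.trace (Qᴴ * Q) := by rw [hQh, hQ]
  have hPnn : 0 ≤ (Matrix.trace P).re := hPtr ▸ trace_re_nonneg Q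
  have hfr : ∀ V : Matrix (Fin n) (Fin k) ℂ, Vᴴ * V = 1 →
      frob (V * Q) = Real.sqrt ((Matrix.trace P).re) := by
    intro V hV; rw [frob, hsq V hV]
  have hWA : Matrix.trace (Wᴴ * A) = Matrix.trace ((W * Q)ᴴ * (U * Q)) := by
    calc Matrix.trace (Wᴴ * A) = Matrix.trace ((Wᴴ * (U * Q)) * Q) := by
          rw [hpolar, ← hQ]; simp only [Matrix.mul_assoc]
      _ = Matrix.trace (Q * (Wᴴ * (U * Q))) := (Matrix.trace_mul_comm _ _)
      _ = Matrix.trace ((W * Q)ᴴ * (U * Q)) := by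
          rw [Matrix.conjTranspose_mul, hQh]; simp only [Matrix.mul_assoc]
  have key : (Matrix.trace (Wᴴ * A)).re ≤ (Matrix.trace (Uᴴ * A)).re := by
    rw [hUA, hWA]
    calc (Matrix.trace ((W * Q)ᴴ * (U * Q))).re ≤ frob (W * Q) * frob (U * Q) := cs _ _
      _ = (Matrix.trace P).re := by
          rw [hfr W hW, hfr U hU, Real.mul_self_sqrt hPnn]
  rw [frob, frob]
  apply Real.sqrt_le_sqrt
  rw [expand_sub A U hU, expand_sub A W hW]
  linarith
end

section
/- Let V₁, V₂ : ℂ⁴ → ℂ² be defined by V₁(x₁,x₂,x₃,x₄) = (x₁,x₂) and V₂(x₁,x₂,x₃,x₄) = (x₃, (x₂ - x₄)/√2). Then V = (V₁, V₂) is a projective reconstruction system for ℂ⁴ with weights (1,1), but V admits no projective dual: there is no pair (W₁, W₂) with W₁* V₁ + W₂* V₂ = I and each W_i W_i* a positive multiple of I_{ℂ²}. -/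
open scoped Matrix ComplexOrder

lemma posDef_conjTranspose_mul_self_of_isUnit {n : Type*} [Fintype n] [DecidableEq n]
    (A : Matrix n n ℂ) (hA : IsUnit A) : (Aᴴ * A).PosDef := by
  refine Matrix.posDef_iff_dotProduct_mulVec.mpr ⟨Matrix.isHermitian_conjTranspose_mul_self _, fun x hx => ?_⟩
  rw [← Matrix.mulVec_mulVec, Matrix.dotProduct_mulVec, Matrix.vecMul_conjTranspose, star_star]
  exact Matrix.dotProduct_star_self_pos_iff.mpr
    (((Matrix.mulVec_injective_iff_isUnit.mpr hA).ne_iff' (A.mulVec_zero)).2 hx)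

/-- the concrete pair `V₁(x) = (x₁,x₂)`,
`V₂(x) = (x₃, (x₂-x₄)/√2)` is a projective reconstruction system for `ℂ⁴` with
weights `(1,1)`, but it admits no projective dual. -/
theorem riesz_example_no_projective_dual
    (V₁ V₂ : Matrix (Fin 2) (Fin 4) ℂ)
    (hV₁ : V₁ = !![1, 0, 0, 0; 0, 1, 0, 0])
    (hV₂ : V₂ = !![0, 0, 1, 0;
                   0, ((Real.sqrt 2 : ℝ) : ℂ)⁻¹, 0, -((Real.sqrt 2 : ℝ) : ℂ)⁻¹]) :
    -- `V = (V₁, V₂)` is a projective RS with weights `(1,1)`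
    (V₁ᴴ * V₁ + V₂ᴴ * V₂).PosDef ∧
    V₁ * V₁ᴴ = 1 ∧ V₂ * V₂ᴴ = 1 ∧
    -- but it has no projective dual
    ¬ ∃ W₁ W₂ : Matrix (Fin 2) (Fin 4) ℂ,
        W₁ᴴ * V₁ + W₂ᴴ * V₂ = 1 ∧
        (∃ c₁ : ℝ, 0 < c₁ ∧ W₁ * W₁ᴴ = ((c₁ : ℝ) : ℂ) • 1) ∧
        (∃ c₂ : ℝ, 0 < c₂ ∧ W₂ * W₂ᴴ = ((c₂ : ℝ) : ℂ) • 1) := by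
  subst hV₁ hV₂
  have h2 : ((Real.sqrt 2 : ℝ) : ℂ)⁻¹ * ((Real.sqrt 2 : ℝ) : ℂ)⁻¹ = (1:ℂ)/2 := by
    rw [← mul_inv, ← Complex.ofReal_mul, Real.mul_self_sqrt (by norm_num : (0:ℝ) ≤ 2)]
    norm_num
  refine ⟨?_, ?_, ?_, ?_⟩
  · -- positive definiteness of the frame operator
    have key :
        (!![1, 0, 0, 0; 0, 1, 0, 0] : Matrix (Fin 2) (Fin 4) ℂ)ᴴ *
          (!![1, 0, 0, 0; 0, 1, 0, 0] : Matrix (Fin 2) (Fin 4) ℂ) +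
        (!![0, 0, 1, 0; 0, ((Real.sqrt 2 : ℝ) : ℂ)⁻¹, 0, -((Real.sqrt 2 : ℝ) : ℂ)⁻¹] :
            Matrix (Fin 2) (Fin 4) ℂ)ᴴ *
          (!![0, 0, 1, 0; 0, ((Real.sqrt 2 : ℝ) : ℂ)⁻¹, 0, -((Real.sqrt 2 : ℝ) : ℂ)⁻¹] :
            Matrix (Fin 2) (Fin 4) ℂ) =
        (!![1,0,0,0; 0,1,0,0; 0,0,1,0;
            0,((Real.sqrt 2 : ℝ) : ℂ)⁻¹,0,-((Real.sqrt 2 : ℝ) : ℂ)⁻¹] :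
            Matrix (Fin 4) (Fin 4) ℂ)ᴴ *
          (!![1,0,0,0; 0,1,0,0; 0,0,1,0;
              0,((Real.sqrt 2 : ℝ) : ℂ)⁻¹,0,-((Real.sqrt 2 : ℝ) : ℂ)⁻¹] :
              Matrix (Fin 4) (Fin 4) ℂ) := by
      ext i j
      fin_cases i <;> fin_cases j <;>
        simp [Matrix.mul_apply, Fin.sum_univ_succ, Matrix.conjTranspose_apply,
          Matrix.vecHead, Matrix.vecTail]
    rw [key]
    apply posDef_conjTranspose_mul_self_of_isUnit
    apply (Matrix.isUnit_iff_isUnit_det _).mpr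
    apply Matrix.isUnit_det_of_right_inverse
      (B := !![1,0,0,0; 0,1,0,0; 0,0,1,0; 0,1,0,-((Real.sqrt 2 : ℝ) : ℂ)])
    ext i j
    fin_cases i <;> fin_cases j <;>
      simp [Matrix.mul_apply, Fin.sum_univ_succ, Matrix.one_apply,
        Matrix.vecHead, Matrix.vecTail]
  · -- V₁ V₁ᴴ = 1
    ext i j
    fin_cases i <;> fin_cases j <;>
      simp [Matrix.mul_apply, Fin.sum_univ_four, Matrix.conjTranspose_apply, Matrix.one_apply]
  · -- V₂ V₂ᴴ = 1
    ext i j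
    fin_cases i <;> fin_cases j <;>
      simp [Matrix.mul_apply, Fin.sum_univ_four, Matrix.conjTranspose_apply, Matrix.one_apply] <;>
      linear_combination 2 * h2
  · -- no projective dual
    rintro ⟨W₁, W₂, hEq, ⟨c₁, hc₁pos, hc₁⟩, -⟩
    set a : ℂ := ((Real.sqrt 2 : ℝ) : ℂ)⁻¹ with ha
    have ha0 : a ≠ 0 := by
      rw [ha]
      simp only [ne_eq, inv_eq_zero, Complex.ofReal_eq_zero]
      positivity
    have E := Matrix.ext_iff.mpr hEq
    have h00 := E 0 0; have h01 := E 1 0; have h02 := E 2 0; have h03 := E 3 0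
    have g0 := E 0 3; have g1 := E 1 3; have g2 := E 2 3; have g3 := E 3 3
    have k0 := E 0 1; have k1 := E 1 1; have k2 := E 2 1; have k3 := E 3 1
    simp [Matrix.mul_apply, Fin.sum_univ_succ, Matrix.one_apply, Matrix.vecHead, Matrix.vecTail]
      at h00 h01 h02 h03 g0 g1 g2 g3 k0 k1 k2 k3
    replace g0 := g0.resolve_right ha0
    replace g1 := g1.resolve_right ha0
    replace g2 := g2.resolve_right ha0
    have w00 : W₁ 0 0 = 1 := by simpa using congrArg (starRingEnd ℂ) h00
    have w10 : W₁ 1 0 = 0 := by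
      rw [g0] at k0; simp at k0
      simpa using congrArg (starRingEnd ℂ) k0
    have w11 : W₁ 1 1 = 1 := by
      rw [g1] at k1; simp at k1
      simpa using congrArg (starRingEnd ℂ) k1
    have w12 : W₁ 1 2 = 0 := by
      rw [g2] at k2; simp at k2
      simpa using congrArg (starRingEnd ℂ) k2
    have w13 : W₁ 1 3 = 1 := by
      have h : (starRingEnd ℂ) (W₁ 1 3) = 1 := by linear_combination k3 + g3
      simpa using congrArg (starRingEnd ℂ) h
    have F0 := Matrix.ext_iff.mpr hc₁ 0 0
    have F1 := Matrix.ext_iff.mpr hc₁ 1 1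
    simp [Matrix.mul_apply, Fin.sum_univ_four, Matrix.conjTranspose_apply, Matrix.one_apply,
      w00, w10, w11, w12, w13, h01, h02, h03] at F0 F1
    rw [← F0] at F1
    norm_num at F1
end
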